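/- arXiv:1712.08836 — 6 statements merged into one kernel-verified Lean document; each statement's English description precedes it below -/
import Mathlib

section
/- If γ > 1, λ ∈ (0, 1/2), and u ∈ [λ, 1−λ], then u^γ + (1−u)^γ ≤ 1 − 2λ(1 − 2^{1−γ}). -/
theorem stmt0 (γ lam u : ℝ) (hγ : 1 < γ) (hlam : lam ∈ Set.Ioo (0:ℝ) (1/2))
    (hu : u ∈ Set.Icc lam (1 - lam)) :
    u ^ γ + (1 - u) ^ γ ≤ 1 - 2 * lam * (1 - 2 ^ (1 - γ)) := by
  obtain ⟨hl0, hl2⟩ := hlam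
  obtain ⟨hu1, hu2⟩ := hu
  have C := convexOn_rpow hγ.le
  have key : ∀ x y a b : ℝ, 0 ≤ x → 0 ≤ y → 0 ≤ a → 0 ≤ b → a + b = 1 →
      (a*x + b*y) ^ γ ≤ a * x ^ γ + b * y ^ γ := by
    intro x y a b hx hy ha hb hab
    have := C.2 (Set.mem_Ici.2 hx) (Set.mem_Ici.2 hy) ha hb hab
    simpa [smul_eq_mul] using this
  have hd : (0:ℝ) < 1 - 2*lam := by linarith
  set a : ℝ := (1 - lam - u)/(1 - 2*lam) with ha_def
  set b : ℝ := (u - lam)/(1 - 2*lam) with hb_def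
  have ha : 0 ≤ a := div_nonneg (by linarith) hd.le
  have hb : 0 ≤ b := div_nonneg (by linarith) hd.le
  have hab : a + b = 1 := by rw [ha_def, hb_def, ← add_div, div_eq_one_iff_eq hd.ne']; ring
  have hcomb1 : a * lam + b * (1 - lam) = u := by
    rw [ha_def, hb_def, div_mul_eq_mul_div, div_mul_eq_mul_div, ← add_div, div_eq_iff hd.ne']; ring
  have hcomb2 : a * (1 - lam) + b * lam = 1 - u := by
    rw [ha_def, hb_def, div_mul_eq_mul_div, div_mul_eq_mul_div, ← add_div, div_eq_iff hd.ne']; ring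
  have h1 : u ^ γ ≤ a * lam ^ γ + b * (1 - lam) ^ γ := by
    have := key lam (1 - lam) a b hl0.le (by linarith) ha hb hab
    rwa [hcomb1] at this
  have h2 : (1 - u) ^ γ ≤ a * (1 - lam) ^ γ + b * lam ^ γ := by
    have := key (1 - lam) lam a b (by linarith) hl0.le ha hb hab
    rwa [hcomb2] at this
  -- now bound lam^γ and (1-lam)^γ
  have h3 : lam ^ γ ≤ (1 - 2*lam) * (0:ℝ) ^ γ + (2*lam) * (1/2) ^ γ := by
    have := key 0 (1/2) (1 - 2*lam) (2*lam) le_rfl (by norm_num) hd.le (by linarith) (by ring)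
    have e : (1 - 2*lam) * 0 + (2*lam) * (1/2) = lam := by ring
    rwa [e] at this
  have h4 : (1 - lam) ^ γ ≤ (2*lam) * (1/2) ^ γ + (1 - 2*lam) * (1:ℝ) ^ γ := by
    have := key (1/2) 1 (2*lam) (1 - 2*lam) (by norm_num) zero_le_one (by linarith) hd.le (by ring)
    have e : (2*lam) * (1/2) + (1 - 2*lam) * 1 = 1 - lam := by ring
    rwa [e] at this
  have h0 : (0:ℝ) ^ γ = 0 := Real.zero_rpow (by linarith)
  have h1' : (1:ℝ) ^ γ = 1 := Real.one_rpow γ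
  have hhalf : (2:ℝ) ^ (1 - γ) = 2 * (1/2) ^ γ := by
    rw [Real.rpow_sub (by norm_num), Real.rpow_one, Real.div_rpow zero_le_one (by norm_num),
      Real.one_rpow]
    ring
  rw [h0] at h3
  rw [h1'] at h4
  have hsum : lam ^ γ + (1 - lam) ^ γ ≤ 1 - 2*lam + 4*lam * (1/2) ^ γ := by linarith
  have h5 : u ^ γ + (1 - u) ^ γ ≤ lam ^ γ + (1 - lam) ^ γ := by
    have e : a * lam ^ γ + b * (1 - lam) ^ γ + (a * (1 - lam) ^ γ + b * lam ^ γ)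
        = (a + b) * (lam ^ γ + (1 - lam) ^ γ) := by ring
    have e2 : (a + b) * (lam ^ γ + (1 - lam) ^ γ) = lam ^ γ + (1 - lam) ^ γ := by
      rw [hab]; ring
    linarith
  rw [hhalf]
  linarith
end

section
/- For any complex numbers u, v and any γ with 0 < γ ≤ 1, one has |u^⟨γ⟩ − v^⟨γ⟩| ≤ 2^{1−γ} |u − v|^γ. -/
/-- `z^⟨γ⟩ = conj z * |z|^(γ-1)`. -/
noncomputable def anglePow (z : ℂ) (γ : ℝ) : ℂ :=
  (starRingEnd ℂ) z * ((‖z‖ ^ (γ - 1) : ℝ) : ℂ)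

/-- Real subadditivity of `rpow` for exponents in `[0,1]`. -/
lemma my_add_rpow_le (x y γ : ℝ) (hx : 0 ≤ x) (hy : 0 ≤ y) (h0 : 0 ≤ γ) (h1 : γ ≤ 1) :
    (x + y) ^ γ ≤ x ^ γ + y ^ γ := by
  have h := NNReal.rpow_add_le_add_rpow x.toNNReal y.toNNReal h0 h1
  calc (x + y) ^ γ = (((x.toNNReal + y.toNNReal : NNReal)):ℝ) ^ γ := by
        rw [NNReal.coe_add, Real.coe_toNNReal x hx, Real.coe_toNNReal y hy]
    _ = (((x.toNNReal + y.toNNReal) ^ γ : NNReal) : ℝ) := (NNReal.coe_rpow _ _).symm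
    _ ≤ ((x.toNNReal ^ γ + y.toNNReal ^ γ : NNReal) : ℝ) := by exact_mod_cast h
    _ = x ^ γ + y ^ γ := by
        rw [NNReal.coe_add, NNReal.coe_rpow, NNReal.coe_rpow,
          Real.coe_toNNReal x hx, Real.coe_toNNReal y hy]

lemma my_rpow_sub_le (r s γ : ℝ) (hs : 0 ≤ s) (hsr : s ≤ r) (h0 : 0 ≤ γ) (h1 : γ ≤ 1) :
    r ^ γ - s ^ γ ≤ (r - s) ^ γ := by
  have h := my_add_rpow_le (r - s) s γ (by linarith) hs h0 h1
  rw [show r - s + s = r from by ring] at h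
  linarith

/-- Power-mean: `r^γ + s^γ ≤ 2^(1-γ) (r+s)^γ` for `γ ∈ [0,1]`. -/
lemma my_rpow_add_le (r s γ : ℝ) (hr : 0 ≤ r) (hs : 0 ≤ s) (h0 : 0 ≤ γ) (h1 : γ ≤ 1) :
    r ^ γ + s ^ γ ≤ 2 ^ (1 - γ) * (r + s) ^ γ := by
  have hc := (Real.concaveOn_rpow h0 h1).2 (Set.mem_Ici.2 hr) (Set.mem_Ici.2 hs)
      (by norm_num : (0:ℝ) ≤ (1:ℝ)/2) (by norm_num : (0:ℝ) ≤ (1:ℝ)/2) (by norm_num)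
  simp only [smul_eq_mul] at hc
  have hmid : ((1:ℝ)/2 * r + 1/2 * s) = (r + s) / 2 := by ring
  rw [hmid] at hc
  have hdiv : ((r + s) / 2) ^ γ = (r + s) ^ γ / 2 ^ γ := by
    rw [Real.div_rpow (by linarith) (by norm_num)]
  rw [hdiv] at hc
  have h2 : (2:ℝ) ^ (1 - γ) = 2 / 2 ^ γ := by
    rw [eq_div_iff (by positivity), ← Real.rpow_add (by norm_num)]
    norm_num
  have h2γ : (0:ℝ) < 2 ^ γ := Real.rpow_pos_of_pos (by norm_num) γ
  rw [h2, div_mul_eq_mul_div, le_div_iff₀ h2γ]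
  rw [le_div_iff₀ h2γ] at hc
  nlinarith [hc]

/-- The key real inequality. -/
lemma my_key (γ r s t : ℝ) (hγ0 : 0 < γ) (hγ1 : γ ≤ 1) (hr : 0 ≤ r) (hs : 0 ≤ s)
    (ht0 : 0 ≤ t) (ht : t ≤ 4 * r * s) :
    (r ^ γ - s ^ γ) ^ 2 + r ^ (γ - 1) * s ^ (γ - 1) * t
      ≤ 2 ^ (2 - 2 * γ) * ((r - s) ^ 2 + t) ^ γ := by
  have hK : (2:ℝ) ^ (2 - 2 * γ) = (2 ^ (1 - γ)) ^ 2 := by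
    rw [← Real.rpow_natCast (2 ^ (1-γ)) 2, ← Real.rpow_mul (by norm_num)]
    norm_num; ring_nf
  have hK1 : (1:ℝ) ≤ 2 ^ (2 - 2 * γ) := by
    apply Real.one_le_rpow (by norm_num) (by linarith)
  -- square form of endpoint 1: (r^γ - s^γ)^2 ≤ 2^(2-2γ) * ((r-s)^2)^γ
  have hsq : ∀ x : ℝ, ((x:ℝ) ^ 2) ^ γ = (|x| ^ γ) ^ 2 := by
    intro x
    rw [← sq_abs x, ← Real.rpow_natCast (|x|) 2, ← Real.rpow_mul (abs_nonneg x),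
      ← Real.rpow_natCast (|x| ^ γ) 2, ← Real.rpow_mul (abs_nonneg x)]
    ring_nf
  have hend1 : (r ^ γ - s ^ γ) ^ 2 ≤ 2 ^ (2 - 2*γ) * ((r - s) ^ 2) ^ γ := by
    have habs : |r ^ γ - s ^ γ| ≤ |r - s| ^ γ := by
      rcases le_total s r with h | h
      · rw [abs_of_nonneg (by
          have := Real.rpow_le_rpow hs h hγ0.le; linarith), abs_of_nonneg (by linarith)]
        exact my_rpow_sub_le r s γ hs h hγ0.le hγ1
      · rw [abs_of_nonpos (by
          have := Real.rpow_le_rpow hr h hγ0.le; linarith), abs_of_nonpos (by linarith)]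
        have := my_rpow_sub_le s r γ hr h hγ0.le hγ1
        rw [show -(r - s) = s - r by ring]; linarith
    have h2 : (r ^ γ - s ^ γ) ^ 2 ≤ (|r - s| ^ γ) ^ 2 := by
      rw [← sq_abs (r ^ γ - s ^ γ)]
      exact pow_le_pow_left₀ (abs_nonneg _) habs 2
    calc (r ^ γ - s ^ γ) ^ 2 ≤ (|r - s| ^ γ) ^ 2 := h2
      _ = ((r - s) ^ 2) ^ γ := (hsq (r - s)).symm
      _ ≤ 2 ^ (2 - 2*γ) * ((r - s) ^ 2) ^ γ :=
          le_mul_of_one_le_left (Real.rpow_nonneg (sq_nonneg (r - s)) γ) hK1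
  -- endpoint 2: (r^γ + s^γ)^2 ≤ 2^(2-2γ) * ((r+s)^2)^γ
  have hend2 : (r ^ γ + s ^ γ) ^ 2 ≤ 2 ^ (2 - 2*γ) * ((r + s) ^ 2) ^ γ := by
    have h1 := my_rpow_add_le r s γ hr hs hγ0.le hγ1
    have h2 : (r ^ γ + s ^ γ) ^ 2 ≤ (2 ^ (1 - γ) * (r + s) ^ γ) ^ 2 := by
      apply pow_le_pow_left₀ (by positivity) h1 2
    calc (r ^ γ + s ^ γ) ^ 2 ≤ (2 ^ (1 - γ) * (r + s) ^ γ) ^ 2 := h2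
      _ = 2 ^ (2 - 2*γ) * ((r + s) ^ 2) ^ γ := by
          rw [mul_pow, hK, hsq (r + s), abs_of_nonneg (by linarith)]
  rcases eq_or_lt_of_le (mul_nonneg (mul_nonneg (by norm_num : (0:ℝ) ≤ 4) hr) hs) with h0 | hpos
  · -- 4*r*s = 0, hence t = 0 and r*s = 0
    have ht' : t = 0 := le_antisymm (h0 ▸ ht) ht0
    subst ht'
    simpa using hend1
  · -- r, s > 0
    have hrs : 0 < r * s := by nlinarith
    have hr' : 0 < r := hr.lt_of_ne fun h => by simp [← h] at hrs
    have hs' : 0 < s := hs.lt_of_ne fun h => by simp [← h] at hrs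
    set lam := t / (4 * r * s) with hlam
    have hlam0 : 0 ≤ lam := div_nonneg ht0 (by positivity)
    have hlam1 : lam ≤ 1 := (div_le_one (by positivity)).2 ht
    have hlamt : lam * (4 * r * s) = t := by rw [hlam]; exact div_mul_cancel₀ _ (by positivity)
    -- concavity
    have hc := (Real.concaveOn_rpow hγ0.le hγ1).2
      (Set.mem_Ici.2 (sq_nonneg (r - s)))
      (Set.mem_Ici.2 (by positivity : (0:ℝ) ≤ (r + s) ^ 2))
      (by linarith : (0:ℝ) ≤ 1 - lam) hlam0 (by ring)
    -- hc : (1-lam) * ((r-s)^2)^γ + lam * ((r+s)^2)^γ ≤ ((1-lam)*(r-s)^2 + lam*(r+s)^2)^γ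
    have harg : (1 - lam) • (r - s) ^ 2 + lam • (r + s) ^ 2 = (r - s) ^ 2 + t := by
      simp only [smul_eq_mul]
      linear_combination hlamt
    rw [harg] at hc
    simp only [smul_eq_mul] at hc
    have hmix : (r ^ γ - s ^ γ) ^ 2 + r ^ (γ - 1) * s ^ (γ - 1) * t
        = (1 - lam) * (r ^ γ - s ^ γ) ^ 2 + lam * (r ^ γ + s ^ γ) ^ 2 := by
      have hrpow : r ^ (γ - 1) * s ^ (γ - 1) * (r * s) = r ^ γ * s ^ γ := by
        rw [show r ^ γ = r ^ (γ - 1) * r by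
            rw [← Real.rpow_add_one hr'.ne' (γ - 1)]; ring_nf,
          show s ^ γ = s ^ (γ - 1) * s by
            rw [← Real.rpow_add_one hs'.ne' (γ - 1)]; ring_nf]
        ring
      have : r ^ (γ - 1) * s ^ (γ - 1) * t = lam * (4 * (r ^ γ * s ^ γ)) := by
        rw [← hlamt, ← hrpow]; ring
      rw [this]; ring
    rw [hmix]
    calc (1 - lam) * (r ^ γ - s ^ γ) ^ 2 + lam * (r ^ γ + s ^ γ) ^ 2
        ≤ (1 - lam) * (2 ^ (2 - 2*γ) * ((r - s) ^ 2) ^ γ)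
          + lam * (2 ^ (2 - 2*γ) * ((r + s) ^ 2) ^ γ) := by
          apply add_le_add
          · exact mul_le_mul_of_nonneg_left hend1 (by linarith)
          · exact mul_le_mul_of_nonneg_left hend2 hlam0
      _ = 2 ^ (2 - 2*γ) * ((1 - lam) * ((r - s) ^ 2) ^ γ + lam * ((r + s) ^ 2) ^ γ) := by
          ring
      _ ≤ 2 ^ (2 - 2*γ) * ((r - s) ^ 2 + t) ^ γ := by
          apply mul_le_mul_of_nonneg_left hc (by positivity)

theorem stmt3 (u v : ℂ) (γ : ℝ) (hγ0 : 0 < γ) (hγ1 : γ ≤ 1) :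
    ‖anglePow u γ - anglePow v γ‖ ≤ 2 ^ (1 - γ) * ‖u - v‖ ^ γ := by
  set r := ‖u‖ with hrdef
  set s := ‖v‖ with hsdef
  have hr : 0 ≤ r := norm_nonneg u
  have hs : 0 ≤ s := norm_nonneg v
  set c := (u * (starRingEnd ℂ) v).re with hcdef
  have hc_le : |c| ≤ r * s := by
    calc |c| ≤ ‖u * (starRingEnd ℂ) v‖ := Complex.abs_re_le_norm _
      _ = r * s := by rw [norm_mul, Complex.norm_conj]
  set t := 2 * (r * s - c) with htdef
  have ht0 : 0 ≤ t := by
    have := (abs_le.1 hc_le).2; simp only [htdef]; linarith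
  have ht4 : t ≤ 4 * r * s := by
    have := (abs_le.1 hc_le).1; simp only [htdef]; linarith
  -- |u - v|^2 = (r-s)^2 + t
  have hd2 : ‖u - v‖ ^ 2 = (r - s) ^ 2 + t := by
    rw [Complex.sq_norm, Complex.normSq_sub, ← Complex.sq_norm, ← Complex.sq_norm]
    simp only [htdef, ← hrdef, ← hsdef, ← hcdef]
    ring
  -- r^(γ-1) * r = r^γ (also for r = 0 since γ > 0)
  have hmul : ∀ x : ℝ, 0 ≤ x → x ^ (γ - 1) * x = x ^ γ := by
    intro x hx
    rcases eq_or_lt_of_le hx with h | h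
    · rw [← h, mul_zero, Real.zero_rpow hγ0.ne']
    · rw [← Real.rpow_add_one h.ne' (γ - 1)]; ring_nf
  -- |anglePow u γ - anglePow v γ|^2 = (r^γ - s^γ)^2 + r^(γ-1)*s^(γ-1)*t
  have hΔ2 : ‖anglePow u γ - anglePow v γ‖ ^ 2
      = (r ^ γ - s ^ γ) ^ 2 + r ^ (γ - 1) * s ^ (γ - 1) * t := by
    rw [Complex.sq_norm, anglePow, anglePow, Complex.normSq_sub]
    have e1 : Complex.normSq ((starRingEnd ℂ) u * ((r ^ (γ - 1) : ℝ) : ℂ))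
        = r ^ 2 * (r ^ (γ - 1)) ^ 2 := by
      rw [Complex.normSq_mul, Complex.normSq_conj, ← Complex.sq_norm, Complex.normSq_ofReal,
        ← hrdef]
      ring
    have e2 : Complex.normSq ((starRingEnd ℂ) v * ((s ^ (γ - 1) : ℝ) : ℂ))
        = s ^ 2 * (s ^ (γ - 1)) ^ 2 := by
      rw [Complex.normSq_mul, Complex.normSq_conj, ← Complex.sq_norm, Complex.normSq_ofReal,
        ← hsdef]
      ring
    have e3 : (((starRingEnd ℂ) u * ((r ^ (γ - 1) : ℝ) : ℂ)) *
        (starRingEnd ℂ) ((starRingEnd ℂ) v * ((s ^ (γ - 1) : ℝ) : ℂ))).re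
        = r ^ (γ - 1) * s ^ (γ - 1) * c := by
      simp only [map_mul, Complex.conj_conj, Complex.conj_ofReal]
      have : ((starRingEnd ℂ) u * ((r ^ (γ - 1) : ℝ) : ℂ)) * (v * ((s ^ (γ - 1) : ℝ) : ℂ))
          = (((r ^ (γ - 1) * s ^ (γ - 1) : ℝ) : ℂ)) * ((starRingEnd ℂ) u * v) := by
        push_cast; ring
      rw [this, Complex.re_ofReal_mul]
      have hre : ((starRingEnd ℂ) u * v).re = c := by
        rw [hcdef, show u * (starRingEnd ℂ) v = (starRingEnd ℂ) ((starRingEnd ℂ) u * v) by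
          simp [map_mul, Complex.conj_conj], Complex.conj_re]
      rw [hre]
    rw [e1, e2, e3]
    have h1 : r ^ 2 * (r ^ (γ - 1)) ^ 2 = (r ^ γ) ^ 2 := by
      rw [← hmul r hr]; ring
    have h2 : s ^ 2 * (s ^ (γ - 1)) ^ 2 = (s ^ γ) ^ 2 := by
      rw [← hmul s hs]; ring
    have h3 : r ^ (γ - 1) * s ^ (γ - 1) * (r * s) = r ^ γ * s ^ γ := by
      rw [← hmul r hr, ← hmul s hs]; ring
    rw [h1, h2]
    simp only [htdef]
    linear_combination (-2 : ℝ) * h3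
  -- apply key inequality
  have hkey := my_key γ r s t hγ0 hγ1 hr hs ht0 ht4
  rw [← hΔ2, ← hd2] at hkey
  -- conclude
  have hRHS : 2 ^ (2 - 2*γ) * (‖u - v‖ ^ 2) ^ γ
      = (2 ^ (1 - γ) * ‖u - v‖ ^ γ) ^ 2 := by
    rw [mul_pow, ← Real.rpow_natCast (2 ^ (1 - γ) : ℝ) 2, ← Real.rpow_mul (by norm_num : (0:ℝ) ≤ 2),
      ← Real.rpow_natCast (‖u - v‖) 2, ← Real.rpow_mul (norm_nonneg _),
      ← Real.rpow_natCast (‖u - v‖ ^ γ) 2, ← Real.rpow_mul (norm_nonneg _)]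
    push_cast
    ring_nf
  rw [hRHS] at hkey
  have hA : 0 ≤ ‖anglePow u γ - anglePow v γ‖ := norm_nonneg _
  have hB : 0 ≤ 2 ^ (1 - γ) * ‖u - v‖ ^ γ := by positivity
  nlinarith [hkey, hA, hB]
end

section
/- For any complex numbers u, v and any γ > 1, one has |u^⟨γ⟩ − v^⟨γ⟩| ≤ γ |u − v| (max(|u|, |v|))^{γ−1}. -/
lemma key_ineq {x y a : ℝ} (hy : 0 ≤ y) (hxy : y ≤ x) (ha : 0 < a) :
    y * (x ^ a - y ^ a) ≤ a * (x - y) * x ^ a := by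
  rcases eq_or_lt_of_le hy with rfl | hy
  · simp only [zero_mul, sub_zero]
    exact mul_nonneg (mul_nonneg ha.le hxy) (Real.rpow_nonneg hxy a)
  have hx : 0 < x := lt_of_lt_of_le hy hxy
  have hB := one_add_mul_self_le_rpow_one_add (s := y / x - 1) (p := 1 + a)
    (by have : 0 < y / x := div_pos hy hx; linarith) (by linarith)
  rw [add_sub_cancel] at hB
  have hdiv : (y / x) ^ (1 + a) = y ^ (1 + a) / x ^ (1 + a) :=
    Real.div_rpow hy.le hx.le _
  have hx1 : x ^ (1 + a) = x * x ^ a := by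
    rw [Real.rpow_add hx, Real.rpow_one]
  have hy1 : y ^ (1 + a) = y * y ^ a := by
    rw [Real.rpow_add hy, Real.rpow_one]
  rw [hdiv, hx1, hy1] at hB
  have hxa : 0 < x ^ a := Real.rpow_pos_of_pos hx a
  rw [le_div_iff₀ (by positivity)] at hB
  have hne : x ≠ 0 := hx.ne'
  field_simp at hB
  nlinarith [hB, hx, mul_pos hx hxa]

theorem stmt4 (u v : ℂ) (γ : ℝ) (hγ : 1 < γ) :
    ‖anglePow u γ - anglePow v γ‖ ≤
      γ * ‖u - v‖ * max ‖u‖ ‖v‖ ^ (γ - 1) := by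
  wlog h : ‖v‖ ≤ ‖u‖ with H
  · push_neg at h
    have := H v u γ hγ h.le
    rwa [norm_sub_rev (anglePow v γ), norm_sub_rev v u, max_comm] at this
  set a := γ - 1 with ha_def
  have ha : 0 < a := by simp [ha_def]; linarith
  have hmax : max (‖u‖) (‖v‖) = ‖u‖ := max_eq_left h
  rw [hmax]
  have hsplit : anglePow u γ - anglePow v γ =
      ((starRingEnd ℂ) u - (starRingEnd ℂ) v) * ((‖u‖ ^ a : ℝ) : ℂ) +
      (starRingEnd ℂ) v * (((‖u‖ ^ a : ℝ) : ℂ) - ((‖v‖ ^ a : ℝ) : ℂ)) := by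
    unfold anglePow; ring
  have h1 : ‖((starRingEnd ℂ) u - (starRingEnd ℂ) v) * ((‖u‖ ^ a : ℝ) : ℂ)‖
      = ‖u - v‖ * ‖u‖ ^ a := by
    rw [norm_mul, ← map_sub (starRingEnd ℂ), Complex.norm_conj, Complex.norm_real, Real.norm_eq_abs,
      abs_of_nonneg (by positivity)]
  have h2 : ‖(starRingEnd ℂ) v * (((‖u‖ ^ a : ℝ) : ℂ) - ((‖v‖ ^ a : ℝ) : ℂ))‖
      = ‖v‖ * (‖u‖ ^ a - ‖v‖ ^ a) := by
    rw [norm_mul, Complex.norm_conj, ← Complex.ofReal_sub, Complex.norm_real, Real.norm_eq_abs,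
      abs_of_nonneg (by simp; exact Real.rpow_le_rpow (norm_nonneg v) h ha.le)]
  have hk : ‖v‖ * (‖u‖ ^ a - ‖v‖ ^ a)
      ≤ a * (‖u‖ - ‖v‖) * ‖u‖ ^ a :=
    key_ineq (norm_nonneg v) h ha
  have htri : ‖u‖ - ‖v‖ ≤ ‖u - v‖ :=
    (abs_le.mp (abs_norm_sub_norm_le u v)).2.trans_eq' rfl
  calc ‖anglePow u γ - anglePow v γ‖
      ≤ ‖u - v‖ * ‖u‖ ^ a
        + ‖v‖ * (‖u‖ ^ a - ‖v‖ ^ a) := by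
        rw [hsplit]; rw [← h1, ← h2]; exact norm_add_le _ _
    _ ≤ ‖u - v‖ * ‖u‖ ^ a
        + a * ‖u - v‖ * ‖u‖ ^ a := by
        refine add_le_add_right (hk.trans ?_) _
        have hxa : (0:ℝ) ≤ ‖u‖ ^ a := by positivity
        nlinarith [mul_nonneg ha.le hxa]
    _ = γ * ‖u - v‖ * ‖u‖ ^ a := by rw [ha_def]; ring
end

section
/- For 0 ≤ r ≤ 1, λ ∈ [−1, 1], and γ > 1, the inequality r^{2γ} − 2r^γ λ + 1 ≤ γ² (r² − 2rλ + 1) holds. -/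
theorem stmt5 (r lam γ : ℝ) (hr0 : 0 ≤ r) (hr1 : r ≤ 1)
    (hlam : lam ∈ Set.Icc (-1 : ℝ) 1) (hγ : 1 < γ) :
    r ^ (2*γ) - 2 * r ^ γ * lam + 1 ≤ γ ^ 2 * (r ^ 2 - 2 * r * lam + 1) := by
  obtain ⟨hl1, hl2⟩ := hlam
  have hγ1 : (1:ℝ) ≤ γ := le_of_lt hγ
  set a := r ^ γ with ha
  have ha0 : 0 ≤ a := Real.rpow_nonneg hr0 γ
  have har : a ≤ r := by
    rcases eq_or_lt_of_le hr0 with h | h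
    · simp [ha, ← h, Real.zero_rpow (by linarith : γ ≠ 0)]
    · calc a ≤ r ^ (1:ℝ) := Real.rpow_le_rpow_of_exponent_ge h hr1 hγ1
      _ = r := Real.rpow_one r
  have hber : 1 - a ≤ γ * (1 - r) := by
    have := one_add_mul_self_le_rpow_one_add (by linarith : (-1:ℝ) ≤ r - 1) hγ1
    have h1r : (1:ℝ) + (r - 1) = r := by ring
    rw [h1r] at this
    linarith
  have ha1 : a ≤ 1 := le_trans har hr1
  have h2γ : r ^ (2*γ) = a ^ 2 := by
    rw [ha, ← Real.rpow_natCast (r ^ γ) 2, ← Real.rpow_mul hr0]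
    push_cast
    ring_nf
  rw [h2γ]
  nlinarith [mul_nonneg (by linarith : 0 ≤ 1 - lam) (by nlinarith [mul_nonneg hr0 (by nlinarith : (0:ℝ) ≤ γ^2 - 1)] : 0 ≤ γ^2 * r - a),
    mul_nonneg (by linarith : 0 ≤ γ * (1 - r) - (1 - a)) (by nlinarith : 0 ≤ γ * (1 - r) + (1 - a))]
end

section
/- Let 1 < p, q, r < ∞ with 1/p + 1/q + 1/r = 2, let k ∈ L^q(ℝ) with k(x) > 0 for all x, and let u : ℝ → (0,1) be monotone increasing with u(y) → 0 as y → −∞ and u(y) → 1 as y → +∞. Then the integral operator K̃f(x) = ∫ k(x−y) u(y) f(y) dy is bounded from L^p(ℝ) to L^{r'}(ℝ) with operator norm equal to that of the convolution with k, but no f ∈ L^p with ‖f‖_p = 1 satisfies ‖K̃f‖_{r'} = ‖K̃‖. -/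
open MeasureTheory Filter
open scoped ENNReal NNReal Topology

lemma mp_refl_trans (x : ℝ) : MeasurePreserving (fun y : ℝ => x - y) volume volume := by
  have h : (fun y : ℝ => x - y) = (fun z : ℝ => x + z) ∘ (fun y : ℝ => -y) := by
    funext y; simp [sub_eq_add_neg]
  rw [h]
  exact (measurePreserving_add_left volume x).comp (Measure.measurePreserving_neg volume)

lemma mp_trans (y : ℝ) : MeasurePreserving (fun x : ℝ => x - y) volume volume := by
  have h : (fun x : ℝ => x - y) = (fun x : ℝ => x + (-y)) := by funext x; ring_nf
  rw [h]
  exact measurePreserving_add_right volume (-y)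

lemma young_meas {φ g : ℝ → ℝ≥0∞} (hφ : Measurable φ) (hg : Measurable g)
    {p q r' : ℝ} (hp : 1 < p) (hq : 1 < q) (hr' : 0 < r')
    (hpq : 1/p + 1/q = 1 + 1/r') :
    ∫⁻ x, (∫⁻ y, φ (x - y) * g y) ^ r' ≤
      (∫⁻ x, φ x ^ q) ^ (r'/q) * (∫⁻ x, g x ^ p) ^ (r'/p) := by
  have hp0 : (0:ℝ) < p := lt_trans one_pos hp
  have hq0 : (0:ℝ) < q := lt_trans one_pos hq
  set a : ℝ := 1/r' with ha_def
  set b : ℝ := 1 - 1/p with hb_def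
  set c : ℝ := 1 - 1/q with hc_def
  have hr'q : (0:ℝ) < r'/q := by positivity
  have hr'p : (0:ℝ) < r'/p := by positivity
  have hip : 1/p < 1 := by rw [div_lt_one hp0]; exact hp
  have hiq : 1/q < 1 := by rw [div_lt_one hq0]; exact hq
  have ha : 0 ≤ a := by positivity
  have hb : 0 ≤ b := by rw [hb_def]; linarith
  have hc : 0 ≤ c := by rw [hc_def]; linarith
  have habc : a + b + c = 1 := by
    have : a = 1/r' := rfl
    simp only [ha_def, hb_def, hc_def]; linarith
  have hqa : q * a + q * b = 1 := by
    have h1 : a + b = 1/q := by rw [ha_def, hb_def]; linarith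
    rw [← mul_add, h1]
    field_simp
  have hpa : p * a + p * c = 1 := by
    have h1 : a + c = 1/p := by rw [ha_def, hc_def]; linarith
    rw [← mul_add, h1]
    field_simp
  have har : a * r' = 1 := by
    simp only [ha_def]; field_simp
  have hbr : 1 + b * r' = r'/q := by
    have h1 : 1/q = 1 + 1/r' - 1/p := by linarith
    rw [div_eq_mul_one_div r' q, h1]
    simp only [hb_def]
    have : r' * (1/r') = 1 := by field_simp
    ring_nf
    ring_nf at this
    nlinarith [this]
  have hcr : 1 + c * r' = r'/p := by
    have h1 : 1/p = 1 + 1/r' - 1/q := by linarith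
    rw [div_eq_mul_one_div r' p, h1]
    simp only [hc_def]
    have : r' * (1/r') = 1 := by field_simp
    ring_nf
    ring_nf at this
    nlinarith [this]
  set Kq := ∫⁻ x, φ x ^ q with hKq_def
  set Gp := ∫⁻ x, g x ^ p with hGp_def
  by_cases hG0 : Gp = 0
  · have hg0 : g =ᵐ[volume] 0 := by
      have := (lintegral_eq_zero_iff (hg.pow_const p)).mp hG0
      filter_upwards [this] with x hx
      simpa [ENNReal.rpow_eq_zero_iff, hp0, hp0.not_gt] using hx
    have hzero : ∀ x : ℝ, (∫⁻ y, φ (x - y) * g y) = 0 := by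
      intro x
      have h1 : (fun y => φ (x - y) * g y) =ᵐ[volume] 0 := by
        filter_upwards [hg0] with y hy; simp [hy]
      rw [lintegral_congr_ae h1]; simp
    simp only [hzero, ENNReal.zero_rpow_of_pos hr']
    simp
  by_cases hK0 : Kq = 0
  · have hφ0 : φ =ᵐ[volume] 0 := by
      have := (lintegral_eq_zero_iff (hφ.pow_const q)).mp hK0
      filter_upwards [this] with x hx
      simpa [ENNReal.rpow_eq_zero_iff, hq0, hq0.not_gt] using hx
    have hzero : ∀ x : ℝ, (∫⁻ y, φ (x - y) * g y) = 0 := by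
      intro x
      have h1 : (fun y => φ (x - y)) =ᵐ[volume] 0 :=
        (mp_refl_trans x).quasiMeasurePreserving.ae_eq_comp hφ0
      have h2 : (fun y => φ (x - y) * g y) =ᵐ[volume] 0 := by
        filter_upwards [h1] with y hy
        have hy' : φ (x - y) = 0 := hy
        simp [hy']
      rw [lintegral_congr_ae h2]; simp
    simp only [hzero, ENNReal.zero_rpow_of_pos hr']
    simp
  by_cases hKt : Kq = ⊤
  · rw [hKt, ENNReal.top_rpow_of_pos hr'q, ENNReal.top_mul]
    · exact le_top
    · simp [ENNReal.rpow_eq_zero_iff, hG0, hr'p, hr'p.not_gt]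
  by_cases hGt : Gp = ⊤
  · rw [hGt, ENNReal.top_rpow_of_pos hr'p, ENNReal.mul_top]
    · exact le_top
    · simp [ENNReal.rpow_eq_zero_iff, hK0, hr'q, hr'q.not_gt]
  -- main case
  have key : ∀ x : ℝ, (∫⁻ y, φ (x - y) * g y) ≤
      (∫⁻ y, φ (x - y) ^ q * g y ^ p) ^ a * Kq ^ b * Gp ^ c := by
    intro x
    have hmx : Measurable fun y => φ (x - y) := hφ.comp (measurable_const.sub measurable_id)
    have h3 := ENNReal.lintegral_prod_norm_pow_le (μ := (volume : Measure ℝ))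
      (Finset.univ : Finset (Fin 3))
      (f := ![fun y => φ (x-y) ^ q * g y ^ p, fun y => φ (x-y) ^ q, fun y => g y ^ p])
      (p := ![a, b, c])
      (by
        intro i _
        fin_cases i
        · exact ((hmx.pow_const q).mul (hg.pow_const p)).aemeasurable
        · exact (hmx.pow_const q).aemeasurable
        · exact (hg.pow_const p).aemeasurable)
      (by simp [Fin.sum_univ_three, habc])
      (by intro i _; fin_cases i <;> simpa using by assumption)
    have hL : (∫⁻ y, ∏ i : Fin 3,
        (![fun y => φ (x-y) ^ q * g y ^ p, fun y => φ (x-y) ^ q, fun y => g y ^ p]) i y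
          ^ (![a, b, c]) i) = ∫⁻ y, φ (x - y) * g y := by
      congr 1
      funext y
      simp only [Fin.prod_univ_three, Matrix.cons_val_zero, Matrix.cons_val_one, Matrix.head_cons,
        Matrix.cons_val_two, Matrix.tail_cons]
      rw [ENNReal.mul_rpow_of_nonneg _ _ ha, ← ENNReal.rpow_mul, ← ENNReal.rpow_mul,
        ← ENNReal.rpow_mul, ← ENNReal.rpow_mul]
      calc φ (x-y) ^ (q*a) * g y ^ (p*a) * φ (x-y) ^ (q*b) * g y ^ (p*c)
          = (φ (x-y) ^ (q*a) * φ (x-y) ^ (q*b)) * (g y ^ (p*a) * g y ^ (p*c)) := by ring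
        _ = φ (x-y) ^ (q*a + q*b) * g y ^ (p*a + p*c) := by
            rw [ENNReal.rpow_add_of_nonneg _ _ (by positivity) (by positivity),
              ENNReal.rpow_add_of_nonneg _ _ (by positivity) (by positivity)]
        _ = φ (x-y) * g y := by rw [hqa, hpa, ENNReal.rpow_one, ENNReal.rpow_one]
    have hR : (∏ i : Fin 3, (∫⁻ y,
        (![fun y => φ (x-y) ^ q * g y ^ p, fun y => φ (x-y) ^ q, fun y => g y ^ p]) i y)
          ^ (![a, b, c]) i) =
        (∫⁻ y, φ (x - y) ^ q * g y ^ p) ^ a * Kq ^ b * Gp ^ c := by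
      simp only [Fin.prod_univ_three, Matrix.cons_val_zero, Matrix.cons_val_one, Matrix.head_cons,
        Matrix.cons_val_two, Matrix.tail_cons]
      have hKx : (∫⁻ y, φ (x - y) ^ q) = Kq :=
        (mp_refl_trans x).lintegral_comp (hφ.pow_const q)
      rw [hKx]
    rw [hL, hR] at h3
    exact h3
  have key2 : ∀ x : ℝ, (∫⁻ y, φ (x - y) * g y) ^ r' ≤
      (∫⁻ y, φ (x - y) ^ q * g y ^ p) * (Kq ^ b * Gp ^ c) ^ r' := by
    intro x
    calc (∫⁻ y, φ (x - y) * g y) ^ r'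
        ≤ ((∫⁻ y, φ (x - y) ^ q * g y ^ p) ^ a * Kq ^ b * Gp ^ c) ^ r' :=
          ENNReal.rpow_le_rpow (key x) hr'.le
      _ = (∫⁻ y, φ (x - y) ^ q * g y ^ p) * (Kq ^ b * Gp ^ c) ^ r' := by
          rw [mul_assoc, ENNReal.mul_rpow_of_nonneg _ _ hr'.le, ← ENNReal.rpow_mul, har,
            ENNReal.rpow_one]
  have hC_ne_top : (Kq ^ b * Gp ^ c) ^ r' ≠ ⊤ := by
    apply ENNReal.rpow_ne_top_of_nonneg hr'.le
    exact ENNReal.mul_ne_top (ENNReal.rpow_ne_top_of_nonneg hb hKt)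
      (ENNReal.rpow_ne_top_of_nonneg hc hGt)
  have hTon : (∫⁻ x, ∫⁻ y, φ (x - y) ^ q * g y ^ p) = Kq * Gp := by
    rw [lintegral_lintegral_swap]
    · have h1 : ∀ y : ℝ, (∫⁻ x, φ (x - y) ^ q * g y ^ p) = Kq * g y ^ p := by
        intro y
        have hm : Measurable fun x : ℝ => φ (x - y) ^ q :=
          (hφ.comp (measurable_id.sub measurable_const)).pow_const q
        rw [lintegral_mul_const _ hm]
        congr 1
        exact (mp_trans y).lintegral_comp (hφ.pow_const q)
      simp only [h1]
      rw [lintegral_const_mul' _ _ hKt]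
    · exact (((hφ.comp (measurable_fst.sub measurable_snd)).pow_const q).mul
        ((hg.comp measurable_snd).pow_const p)).aemeasurable
  calc ∫⁻ x, (∫⁻ y, φ (x - y) * g y) ^ r'
      ≤ ∫⁻ x, (∫⁻ y, φ (x - y) ^ q * g y ^ p) * (Kq ^ b * Gp ^ c) ^ r' :=
        lintegral_mono key2
    _ = (∫⁻ x, ∫⁻ y, φ (x - y) ^ q * g y ^ p) * (Kq ^ b * Gp ^ c) ^ r' :=
        lintegral_mul_const' _ _ hC_ne_top
    _ = Kq * Gp * (Kq ^ b * Gp ^ c) ^ r' := by rw [hTon]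
    _ = Kq ^ (r'/q) * Gp ^ (r'/p) := by
        rw [ENNReal.mul_rpow_of_nonneg _ _ hr'.le, ← ENNReal.rpow_mul, ← ENNReal.rpow_mul]
        rw [← hbr, ← hcr]
        rw [ENNReal.rpow_add_of_nonneg _ _ zero_le_one (by positivity),
          ENNReal.rpow_add_of_nonneg _ _ zero_le_one (by positivity)]
        simp only [ENNReal.rpow_one]
        ring

theorem stmt15 (p q r r' : ℝ) (hp : 1 < p) (hq : 1 < q) (hr : 1 < r)
    (hpqr : 1/p + 1/q + 1/r = 2) (hr' : 1/r + 1/r' = 1)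
    (k : ℝ → ℝ) (hkpos : ∀ x, 0 < k x) (hk : MemLp k (ENNReal.ofReal q) volume)
    (u : ℝ → ℝ) (hu : Monotone u) (hu01 : ∀ y, 0 < u y ∧ u y < 1)
    (hu0 : Tendsto u atBot (nhds 0)) (hu1 : Tendsto u atTop (nhds 1)) :
    (⨆ (f : ℝ → ℂ) (_ : MemLp f (ENNReal.ofReal p) volume ∧
        eLpNorm f (ENNReal.ofReal p) volume = 1),
      eLpNorm (fun x => ∫ y, ((k (x - y) * u y : ℝ) : ℂ) * f y)
        (ENNReal.ofReal r') volume)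
    = (⨆ (f : ℝ → ℂ) (_ : MemLp f (ENNReal.ofReal p) volume ∧
        eLpNorm f (ENNReal.ofReal p) volume = 1),
      eLpNorm (fun x => ∫ y, ((k (x - y) : ℝ) : ℂ) * f y)
        (ENNReal.ofReal r') volume) ∧
    ∀ f : ℝ → ℂ, MemLp f (ENNReal.ofReal p) volume →
      eLpNorm f (ENNReal.ofReal p) volume = 1 →
      eLpNorm (fun x => ∫ y, ((k (x - y) * u y : ℝ) : ℂ) * f y)
          (ENNReal.ofReal r') volume <
        ⨆ (g : ℝ → ℂ) (_ : MemLp g (ENNReal.ofReal p) volume ∧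
            eLpNorm g (ENNReal.ofReal p) volume = 1),
          eLpNorm (fun x => ∫ y, ((k (x - y) * u y : ℝ) : ℂ) * g y)
            (ENNReal.ofReal r') volume := by
  classical
  set SU : ℝ≥0∞ := ⨆ (f : ℝ → ℂ) (_ : MemLp f (ENNReal.ofReal p) volume ∧
        eLpNorm f (ENNReal.ofReal p) volume = 1),
      eLpNorm (fun x => ∫ y, ((k (x - y) * u y : ℝ) : ℂ) * f y)
        (ENNReal.ofReal r') volume with hSU
  set SK : ℝ≥0∞ := ⨆ (f : ℝ → ℂ) (_ : MemLp f (ENNReal.ofReal p) volume ∧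
        eLpNorm f (ENNReal.ofReal p) volume = 1),
      eLpNorm (fun x => ∫ y, ((k (x - y) : ℝ) : ℂ) * f y)
        (ENNReal.ofReal r') volume with hSK
  -- scalar facts
  have hp0 : (0:ℝ) < p := one_pos.trans hp
  have hq0 : (0:ℝ) < q := one_pos.trans hq
  have hr0 : (0:ℝ) < r := one_pos.trans hr
  have hir : 1/r' = 1 - 1/r := by linarith
  have hir0 : 0 < 1/r' := by
    have h2 : 1/r < 1 := by rw [div_lt_one hr0]; exact hr
    rw [hir]; linarith
  have hr'0 : (0:ℝ) < r' := one_div_pos.mp hir0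
  have hr'1 : (1:ℝ) < r' := by
    have h3 : 1/r' < 1 := by
      have : 0 < 1/r := by positivity
      rw [hir]; linarith
    rwa [div_lt_one hr'0] at h3
  have hpq : 1/p + 1/q = 1 + 1/r' := by rw [hir]; linarith
  have hP0 : (ENNReal.ofReal p) ≠ 0 := (ENNReal.ofReal_pos.mpr hp0).ne'
  have hQ0 : (ENNReal.ofReal q) ≠ 0 := (ENNReal.ofReal_pos.mpr hq0).ne'
  have hR'0 : (ENNReal.ofReal r') ≠ 0 := (ENNReal.ofReal_pos.mpr hr'0).ne'
  have hR'1 : 1 ≤ (ENNReal.ofReal r') := by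
    rw [← ENNReal.ofReal_one]; exact ENNReal.ofReal_le_ofReal hr'1.le
  have hvol : (volume : Measure ℝ) ≠ 0 := by
    intro h
    have h2 : (volume : Measure ℝ) (Set.Icc 0 1) = 0 := by rw [h]; rfl
    rw [Real.volume_Icc] at h2
    norm_num at h2
  haveI hNB : (ae (volume : Measure ℝ)).NeBot := ae_neBot.mpr hvol
  -- measurable representatives
  have hksm := hk.1.stronglyMeasurable_mk
  set k' : ℝ → ℝ := hk.1.mk k with hk'def
  have hkk' : k =ᵐ[volume] k' := hk.1.ae_eq_mk
  have hk'm : Measurable k' := hksm.measurable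
  set κ : ℝ → ℝ≥0∞ := fun x => (‖k' x‖₊ : ℝ≥0∞) with hκdef
  have hκm : Measurable κ := hk'm.nnnorm.coe_nnreal_ennreal
  have hkpos' : ∀ᵐ z ∂(volume : Measure ℝ), 0 < k' z := by
    filter_upwards [hkk'] with z hz
    rw [← hz]; exact hkpos z
  have hksl : ∀ x : ℝ, (fun y => k (x - y)) =ᵐ[volume] fun y => k' (x - y) := fun x =>
    (mp_refl_trans x).quasiMeasurePreserving.ae_eq hkk'
  have hkposl : ∀ x : ℝ, ∀ᵐ y ∂(volume : Measure ℝ), 0 < k' (x - y) := fun x =>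
    (mp_refl_trans x).quasiMeasurePreserving.ae hkpos'
  set Cq : ℝ≥0∞ := ∫⁻ x, κ x ^ q with hCqdef
  have hCqt : Cq ≠ ⊤ := by
    have h := hk.2
    rw [eLpNorm_congr_ae hkk', eLpNorm_eq_lintegral_rpow_enorm_toReal hQ0 ENNReal.ofReal_ne_top,
      ENNReal.toReal_ofReal hq0.le] at h
    intro hC
    have hC' : (∫⁻ x, ‖k' x‖ₑ ^ q) = (⊤ : ℝ≥0∞) := hC
    rw [hC', ENNReal.top_rpow_of_pos (by positivity)] at h
    exact (lt_irrefl _ h)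
  have hCq0 : Cq ≠ 0 := by
    intro h0
    rw [lintegral_eq_zero_iff (hκm.pow_const q)] at h0
    obtain ⟨z, hz1, hz2⟩ := (hkpos'.and h0).exists
    simp only [Pi.zero_apply, ENNReal.rpow_eq_zero_iff] at hz2
    rcases hz2 with ⟨h1, _⟩ | ⟨_, hneg⟩
    · have hne : k' z ≠ 0 := ne_of_gt hz1
      have : (‖k' z‖₊ : ℝ≥0∞) = 0 := h1
      simp only [ENNReal.coe_eq_zero, nnnorm_eq_zero] at this
      exact hne this
    · linarith
  -- u facts
  have hum : Measurable u := hu.measurable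
  have huabs : ∀ y, |u y| ≤ 1 := fun y => abs_le.mpr ⟨by linarith [(hu01 y).1], (hu01 y).2.le⟩
  have hw1 : ∀ (w : ℝ → ℝ), (∀ y, |w y| ≤ 1) → ∀ y, (‖w y‖₊ : ℝ≥0∞) ≤ 1 := by
    intro w hw y
    rw [← enorm_eq_nnnorm, ← ofReal_norm, ← ENNReal.ofReal_one]
    exact ENNReal.ofReal_le_ofReal (by rw [Real.norm_eq_abs]; exact hw y)
  -- measurability of the T operator
  have hTm : ∀ g : ℝ → ℝ≥0∞, Measurable g →
      Measurable fun x => ∫⁻ y, κ (x - y) * g y := by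
    intro g hg
    exact Measurable.lintegral_prod_right'
      (f := fun z : ℝ × ℝ => κ (z.1 - z.2) * g z.2)
      ((hκm.comp (measurable_fst.sub measurable_snd)).mul (hg.comp measurable_snd))
  -- Young corollaries
  have hYoung : ∀ g : ℝ → ℝ≥0∞, Measurable g →
      (∫⁻ x, (∫⁻ y, κ (x - y) * g y) ^ r') ≤ Cq ^ (r'/q) * (∫⁻ x, g x ^ p) ^ (r'/p) :=
    fun g hg => young_meas hκm hg hp hq hr'0 hpq
  have hrpow_young : ∀ g : ℝ → ℝ≥0∞, Measurable g →
      (∫⁻ x, (∫⁻ y, κ (x - y) * g y) ^ r') ^ (1/r') ≤ Cq ^ (1/q) * (∫⁻ x, g x ^ p) ^ (1/p) := by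
    intro g hg
    calc (∫⁻ x, (∫⁻ y, κ (x - y) * g y) ^ r') ^ (1/r')
        ≤ (Cq ^ (r'/q) * (∫⁻ x, g x ^ p) ^ (r'/p)) ^ (1/r') :=
          ENNReal.rpow_le_rpow (hYoung g hg) (by positivity)
      _ = Cq ^ (1/q) * (∫⁻ x, g x ^ p) ^ (1/p) := by
          rw [ENNReal.mul_rpow_of_nonneg _ _ (by positivity), ← ENNReal.rpow_mul,
            ← ENNReal.rpow_mul]
          congr 2 <;> · field_simp
  have hfin : ∀ g : ℝ → ℝ≥0∞, Measurable g → (∫⁻ x, g x ^ p) ≠ ⊤ →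
      ∀ᵐ x ∂(volume : Measure ℝ), (∫⁻ y, κ (x - y) * g y) < ⊤ := by
    intro g hg hgt
    have h1 : (∫⁻ x, (∫⁻ y, κ (x - y) * g y) ^ r') ≠ ⊤ :=
      ne_top_of_le_ne_top (ENNReal.mul_ne_top
        (ENNReal.rpow_ne_top_of_nonneg (by positivity) hCqt)
        (ENNReal.rpow_ne_top_of_nonneg (by positivity) hgt)) (hYoung g hg)
    have h2 := ae_lt_top ((hTm g hg).pow_const r') h1
    filter_upwards [h2] with x hx
    by_contra hc
    push_neg at hc
    have hT : (∫⁻ y, κ (x - y) * g y) = ⊤ := top_le_iff.mp hc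
    rw [hT, ENNReal.top_rpow_of_pos hr'0] at hx
    exact (lt_irrefl _ hx)
  -- nnnorm computation
  have hnn : ∀ (w : ℝ → ℝ) (h : ℝ → ℂ) (x y : ℝ),
      (‖((k' (x - y) * w y : ℝ) : ℂ) * h y‖₊ : ℝ≥0∞) =
        κ (x - y) * ((‖w y‖₊ : ℝ≥0∞) * (‖h y‖₊ : ℝ≥0∞)) := by
    intro w h x y
    simp only [nnnorm_mul, ENNReal.coe_mul, Complex.nnnorm_real, hκdef, mul_assoc]
  have hEnorm : ∀ (w : ℝ → ℝ) (h : ℝ → ℂ) (x : ℝ),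
      (‖∫ y, ((k' (x - y) * w y : ℝ) : ℂ) * h y‖₊ : ℝ≥0∞) ≤
        ∫⁻ y, κ (x - y) * ((‖w y‖₊ : ℝ≥0∞) * (‖h y‖₊ : ℝ≥0∞)) := by
    intro w h x
    refine le_trans (enorm_integral_le_lintegral_enorm _) (lintegral_mono fun y => ?_)
    exact le_of_eq (hnn w h x y)
  -- eLpNorm from lintegral
  have hElp_le : ∀ (h : ℝ → ℂ) (G : ℝ → ℝ≥0∞),
      (∀ᵐ x ∂(volume : Measure ℝ), (‖h x‖₊ : ℝ≥0∞) ≤ G x) →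
      eLpNorm h (ENNReal.ofReal r') volume ≤ (∫⁻ x, G x ^ r') ^ (1/r') := by
    intro h G hle
    rw [eLpNorm_eq_lintegral_rpow_enorm_toReal hR'0 ENNReal.ofReal_ne_top,
      ENNReal.toReal_ofReal hr'0.le]
    refine ENNReal.rpow_le_rpow (lintegral_mono_ae ?_) (by positivity)
    filter_upwards [hle] with x hx
    exact ENNReal.rpow_le_rpow hx hr'0.le
  have hElp_eq : ∀ (h : ℝ → ℂ) (G : ℝ → ℝ≥0∞),
      (∀ᵐ x ∂(volume : Measure ℝ), (‖h x‖₊ : ℝ≥0∞) = G x) →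
      eLpNorm h (ENNReal.ofReal r') volume = (∫⁻ x, G x ^ r') ^ (1/r') := by
    intro h G heq
    rw [eLpNorm_eq_lintegral_rpow_enorm_toReal hR'0 ENNReal.ofReal_ne_top,
      ENNReal.toReal_ofReal hr'0.le]
    congr 1
    apply lintegral_congr_ae
    filter_upwards [heq] with x hx
    rw [enorm_eq_nnnorm, hx]
  -- integrability of slices
  have hIntSlice : ∀ (w : ℝ → ℝ) (h : ℝ → ℂ), Measurable w → StronglyMeasurable h →
      (∀ y, |w y| ≤ 1) → ∀ x : ℝ,
      (∫⁻ y, κ (x - y) * (‖h y‖₊ : ℝ≥0∞)) < ⊤ →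
      Integrable (fun y => ((k' (x - y) * w y : ℝ) : ℂ) * h y) volume := by
    intro w h hwm hhm hw x hx
    constructor
    · apply Measurable.aestronglyMeasurable
      exact (Complex.measurable_ofReal.comp
        ((hk'm.comp (measurable_const.sub measurable_id)).mul hwm)).mul hhm.measurable
    · show (∫⁻ y, (‖((k' (x - y) * w y : ℝ) : ℂ) * h y‖₊ : ℝ≥0∞)) < ⊤
      refine lt_of_le_of_lt (lintegral_mono fun y => ?_) hx
      rw [hnn]
      calc κ (x - y) * ((‖w y‖₊ : ℝ≥0∞) * (‖h y‖₊ : ℝ≥0∞))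
          ≤ κ (x - y) * (1 * (‖h y‖₊ : ℝ≥0∞)) := by
            exact mul_le_mul_right (mul_le_mul_left (hw1 w hw y) _) _
        _ = κ (x - y) * (‖h y‖₊ : ℝ≥0∞) := by rw [one_mul]
  -- membership of the norm competitor
  have hMAIN2 : ∀ f : ℝ → ℂ, MemLp f (ENNReal.ofReal p) volume →
      eLpNorm f (ENNReal.ofReal p) volume = 1 →
      MemLp (fun y => ((‖f y‖ : ℝ) : ℂ)) (ENNReal.ofReal p) volume ∧
      eLpNorm (fun y => ((‖f y‖ : ℝ) : ℂ)) (ENNReal.ofReal p) volume = 1 := by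
    intro f hf h1
    have hnormeq : eLpNorm (fun y => ((‖f y‖ : ℝ) : ℂ)) (ENNReal.ofReal p) volume =
        eLpNorm f (ENNReal.ofReal p) volume :=
      eLpNorm_congr_norm_ae (Eventually.of_forall fun y => by
        rw [Complex.norm_real, norm_norm])
    refine ⟨⟨Complex.continuous_ofReal.comp_aestronglyMeasurable hf.1.norm, ?_⟩, ?_⟩
    · rw [hnormeq]; exact hf.2
    · rw [hnormeq]; exact h1

  -- MAIN1 : strict inequality against the norm competitor
  have hMAIN1 : ∀ f : ℝ → ℂ, MemLp f (ENNReal.ofReal p) volume →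
      eLpNorm f (ENNReal.ofReal p) volume = 1 →
      eLpNorm (fun x => ∫ y, ((k (x - y) * u y : ℝ) : ℂ) * f y) (ENNReal.ofReal r') volume <
      eLpNorm (fun x => ∫ y, ((k (x - y) : ℝ) : ℂ) * ((‖f y‖ : ℝ) : ℂ))
        (ENNReal.ofReal r') volume := by
    intro f hf h1
    set f₀ : ℝ → ℂ := hf.1.mk f with hf₀def
    have hff₀ : f =ᵐ[volume] f₀ := hf.1.ae_eq_mk
    have hf₀sm : StronglyMeasurable f₀ := hf.1.stronglyMeasurable_mk
    set m : ℝ → ℝ≥0∞ := fun y => (‖f₀ y‖₊ : ℝ≥0∞) with hmdef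
    have hmm : Measurable m := hf₀sm.measurable.nnnorm.coe_nnreal_ennreal
    have h1' : eLpNorm f₀ (ENNReal.ofReal p) volume = 1 := by
      rw [← eLpNorm_congr_ae hff₀]; exact h1
    have hNp : (∫⁻ y, m y ^ p) = 1 := by
      have h2 := h1'
      rw [eLpNorm_eq_lintegral_rpow_enorm_toReal hP0 ENNReal.ofReal_ne_top,
        ENNReal.toReal_ofReal hp0.le] at h2
      have h3 := congrArg (fun z : ℝ≥0∞ => z ^ p) h2
      rw [← ENNReal.rpow_mul, one_div, inv_mul_cancel₀ hp0.ne', ENNReal.rpow_one,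
        ENNReal.one_rpow] at h3
      exact h3
    have hNpt : (∫⁻ y, m y ^ p) ≠ ⊤ := by rw [hNp]; exact ENNReal.one_ne_top
    have hTfin : ∀ᵐ x ∂(volume : Measure ℝ), (∫⁻ y, κ (x - y) * m y) < ⊤ := hfin m hmm hNpt
    -- the weighted ENNReal kernels
    have hTu_le : ∀ x : ℝ, (∫⁻ y, κ (x - y) * ((‖u y‖₊ : ℝ≥0∞) * m y)) ≤
        ∫⁻ y, κ (x - y) * m y := by
      intro x
      refine lintegral_mono fun y => mul_le_mul_right ?_ _
      calc (‖u y‖₊ : ℝ≥0∞) * m y ≤ 1 * m y := mul_le_mul_left (hw1 u huabs y) _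
        _ = m y := one_mul _
    have hstrict_x : ∀ᵐ x ∂(volume : Measure ℝ),
        (∫⁻ y, κ (x - y) * ((‖u y‖₊ : ℝ≥0∞) * m y)) < ∫⁻ y, κ (x - y) * m y := by
      filter_upwards [hTfin] with x hx
      apply lintegral_strict_mono_of_ae_le_of_frequently_ae_lt
      · exact ((hκm.comp (measurable_const.sub measurable_id)).mul hmm).aemeasurable
      · exact ne_top_of_le_ne_top hx.ne (hTu_le x)
      · refine Eventually.of_forall fun y => mul_le_mul_right ?_ _
        calc (‖u y‖₊ : ℝ≥0∞) * m y ≤ 1 * m y := mul_le_mul_left (hw1 u huabs y) _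
          _ = m y := one_mul _
      · have hne : ¬ (∀ᵐ y ∂(volume : Measure ℝ), f₀ y = 0) := by
          intro hzero
          have h4 := h1'
          rw [eLpNorm_congr_ae hzero, eLpNorm_zero'] at h4
          exact one_ne_zero h4.symm
        have hfreq : ∃ᵐ y ∂(volume : Measure ℝ), f₀ y ≠ 0 := Filter.not_eventually.mp hne
        refine (hfreq.and_eventually (hkposl x)).mono fun y hy => ?_
        obtain ⟨hy1, hy2⟩ := hy
        have hκ0 : κ (x - y) ≠ 0 := by
          rw [hκdef]
          simp [hy2.ne']
        have hκt : κ (x - y) ≠ ⊤ := ENNReal.coe_ne_top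
        have hm0 : m y ≠ 0 := by
          rw [hmdef]
          simp [hy1]
        have hmt : m y ≠ ⊤ := ENNReal.coe_ne_top
        have hu_lt : (‖u y‖₊ : ℝ≥0∞) < 1 := by
          rw [← enorm_eq_nnnorm, ← ofReal_norm, Real.norm_eq_abs, abs_of_pos (hu01 y).1,
            ← ENNReal.ofReal_one]
          exact (ENNReal.ofReal_lt_ofReal_iff one_pos).mpr (hu01 y).2
        apply ne_of_lt
        calc κ (x - y) * ((‖u y‖₊ : ℝ≥0∞) * m y) < κ (x - y) * (1 * m y) := by
              rw [ENNReal.mul_lt_mul_iff_right hκ0 hκt]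
              exact (ENNReal.mul_lt_mul_iff_left hm0 hmt).mpr hu_lt
          _ = κ (x - y) * m y := by rw [one_mul]
    -- strict inequality of the outer lintegrals
    have hmu : Measurable fun y => (‖u y‖₊ : ℝ≥0∞) * m y :=
      (hum.nnnorm.coe_nnreal_ennreal).mul hmm
    have hYut : (∫⁻ x, (∫⁻ y, κ (x - y) * ((‖u y‖₊ : ℝ≥0∞) * m y)) ^ r') ≠ ⊤ := by
      refine ne_top_of_le_ne_top (ENNReal.mul_ne_top
        (ENNReal.rpow_ne_top_of_nonneg (by positivity) hCqt)
        (ENNReal.rpow_ne_top_of_nonneg (by positivity) ?_)) (hYoung _ hmu)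
      refine ne_top_of_le_ne_top hNpt (lintegral_mono fun y => ?_)
      refine ENNReal.rpow_le_rpow ?_ hp0.le
      calc (‖u y‖₊ : ℝ≥0∞) * m y ≤ 1 * m y := mul_le_mul_left (hw1 u huabs y) _
        _ = m y := one_mul _
    have hIstrict : (∫⁻ x, (∫⁻ y, κ (x - y) * ((‖u y‖₊ : ℝ≥0∞) * m y)) ^ r') <
        ∫⁻ x, (∫⁻ y, κ (x - y) * m y) ^ r' := by
      refine lintegral_strict_mono_of_ae_le_of_frequently_ae_lt
        (((hTm m hmm).pow_const r').aemeasurable) hYut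
        (Eventually.of_forall fun x => ENNReal.rpow_le_rpow (hTu_le x) hr'0.le) ?_
      exact ((hstrict_x.mono fun x hx => (ENNReal.rpow_lt_rpow hx hr'0).ne).frequently)
    -- left comparison
    have hAle : eLpNorm (fun x => ∫ y, ((k (x - y) * u y : ℝ) : ℂ) * f y)
        (ENNReal.ofReal r') volume ≤
        (∫⁻ x, (∫⁻ y, κ (x - y) * ((‖u y‖₊ : ℝ≥0∞) * m y)) ^ r') ^ (1/r') := by
      apply hElp_le
      refine Eventually.of_forall fun x => ?_
      have e1 : (∫ y, ((k (x - y) * u y : ℝ) : ℂ) * f y) =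
          ∫ y, ((k' (x - y) * u y : ℝ) : ℂ) * f₀ y := by
        apply integral_congr_ae
        filter_upwards [hksl x, hff₀] with y hky hfy
        rw [hky, hfy]
      rw [e1]
      exact hEnorm u f₀ x
    -- right identification
    have hBg : eLpNorm (fun x => ∫ y, ((k (x - y) : ℝ) : ℂ) * ((‖f y‖ : ℝ) : ℂ))
        (ENNReal.ofReal r') volume =
        (∫⁻ x, (∫⁻ y, κ (x - y) * m y) ^ r') ^ (1/r') := by
      apply hElp_eq
      filter_upwards [hTfin] with x hx
      have hint : Integrable (fun y => k' (x - y) * ‖f₀ y‖) volume := by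
        constructor
        · exact ((hk'm.comp (measurable_const.sub measurable_id)).mul
            hf₀sm.measurable.norm).aestronglyMeasurable
        · show (∫⁻ y, (‖k' (x - y) * ‖f₀ y‖‖₊ : ℝ≥0∞)) < ⊤
          refine lt_of_le_of_lt (lintegral_mono fun y => ?_) hx
          simp only [nnnorm_mul, ENNReal.coe_mul, nnnorm_norm]
          exact le_rfl
      have e1 : (∫ y, ((k (x - y) : ℝ) : ℂ) * ((‖f y‖ : ℝ) : ℂ)) =
          (((∫ y, k' (x - y) * ‖f₀ y‖) : ℝ) : ℂ) := by
        have e0 : (∫ y, ((k' (x - y) * ‖f₀ y‖ : ℝ) : ℂ)) =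
            (((∫ y, k' (x - y) * ‖f₀ y‖) : ℝ) : ℂ) := integral_ofReal
        rw [← e0]
        apply integral_congr_ae
        filter_upwards [hksl x, hff₀] with y h1y h2y
        rw [h1y, h2y]
        norm_cast
      rw [e1]
      have hG0 : 0 ≤ ∫ y, k' (x - y) * ‖f₀ y‖ := by
        apply integral_nonneg_of_ae
        filter_upwards [hkposl x] with y hy
        positivity
      calc ((‖(((∫ y, k' (x - y) * ‖f₀ y‖) : ℝ) : ℂ)‖₊ : ℝ≥0∞))
          = ENNReal.ofReal (∫ y, k' (x - y) * ‖f₀ y‖) := by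
            rw [← enorm_eq_nnnorm, ← ofReal_norm, Complex.norm_real, Real.norm_eq_abs,
              abs_of_nonneg hG0]
        _ = ∫⁻ y, ENNReal.ofReal (k' (x - y) * ‖f₀ y‖) := by
            apply ofReal_integral_eq_lintegral_ofReal hint
            filter_upwards [hkposl x] with y hy
            positivity
        _ = ∫⁻ y, κ (x - y) * m y := by
            apply lintegral_congr_ae
            filter_upwards [hkposl x] with y hy
            rw [ENNReal.ofReal_mul hy.le, ← Real.enorm_eq_ofReal hy.le,
              ofReal_norm, enorm_eq_nnnorm, enorm_eq_nnnorm]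
    calc eLpNorm (fun x => ∫ y, ((k (x - y) * u y : ℝ) : ℂ) * f y) (ENNReal.ofReal r') volume
        ≤ (∫⁻ x, (∫⁻ y, κ (x - y) * ((‖u y‖₊ : ℝ≥0∞) * m y)) ^ r') ^ (1/r') := hAle
      _ < (∫⁻ x, (∫⁻ y, κ (x - y) * m y) ^ r') ^ (1/r') :=
          ENNReal.rpow_lt_rpow hIstrict (by positivity)
      _ = eLpNorm (fun x => ∫ y, ((k (x - y) : ℝ) : ℂ) * ((‖f y‖ : ℝ) : ℂ))
            (ENNReal.ofReal r') volume := hBg.symm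
  
  -- MAIN3 : the convolution sup is dominated by SU via translations
  have hMAIN3 : ∀ f : ℝ → ℂ, MemLp f (ENNReal.ofReal p) volume →
      eLpNorm f (ENNReal.ofReal p) volume = 1 →
      eLpNorm (fun x => ∫ y, ((k (x - y) : ℝ) : ℂ) * f y) (ENNReal.ofReal r') volume ≤ SU := by
    intro f hf h1
    set f₀ : ℝ → ℂ := hf.1.mk f with hf₀def
    have hff₀ : f =ᵐ[volume] f₀ := hf.1.ae_eq_mk
    have hf₀sm : StronglyMeasurable f₀ := hf.1.stronglyMeasurable_mk
    have hf₀p : MemLp f₀ (ENNReal.ofReal p) volume := hf.ae_eq hff₀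
    set m : ℝ → ℝ≥0∞ := fun y => (‖f₀ y‖₊ : ℝ≥0∞) with hmdef
    have hmm : Measurable m := hf₀sm.measurable.nnnorm.coe_nnreal_ennreal
    have h1' : eLpNorm f₀ (ENNReal.ofReal p) volume = 1 := by
      rw [← eLpNorm_congr_ae hff₀]; exact h1
    have hNp : (∫⁻ y, m y ^ p) = 1 := by
      have h2 := h1'
      rw [eLpNorm_eq_lintegral_rpow_enorm_toReal hP0 ENNReal.ofReal_ne_top,
        ENNReal.toReal_ofReal hp0.le] at h2
      have h3 := congrArg (fun z : ℝ≥0∞ => z ^ p) h2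
      rw [← ENNReal.rpow_mul, one_div, inv_mul_cancel₀ hp0.ne', ENNReal.rpow_one,
        ENNReal.one_rpow] at h3
      exact h3
    have hNpt : (∫⁻ y, m y ^ p) ≠ ⊤ := by rw [hNp]; exact ENNReal.one_ne_top
    have hTfin : ∀ᵐ x ∂(volume : Measure ℝ), (∫⁻ y, κ (x - y) * m y) < ⊤ := hfin m hmm hNpt
    refine ENNReal.le_of_forall_pos_le_add fun ε hε hSUtop => ?_
    -- the error term tends to zero
    have hwm : ∀ t : ℝ, Measurable fun y => ENNReal.ofReal (1 - u (y + t)) * m y := fun t =>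
      (ENNReal.measurable_ofReal.comp
        (measurable_const.sub (hum.comp (measurable_id.add measurable_const)))).mul hmm
    have hD : Tendsto (fun t : ℝ => ∫⁻ y, (ENNReal.ofReal (1 - u (y + t)) * m y) ^ p)
        atTop (𝓝 0) := by
      have h0 : (0:ℝ≥0∞) = ∫⁻ _ : ℝ, 0 := by simp
      rw [h0]
      apply tendsto_lintegral_filter_of_dominated_convergence (fun y => m y ^ p)
      · exact Eventually.of_forall fun t => (hwm t).pow_const p
      · refine Eventually.of_forall fun t => Eventually.of_forall fun y => ?_
        refine ENNReal.rpow_le_rpow ?_ hp0.le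
        have hb : ENNReal.ofReal (1 - u (y + t)) ≤ 1 := by
          rw [← ENNReal.ofReal_one]
          exact ENNReal.ofReal_le_ofReal (by linarith [(hu01 (y + t)).1])
        calc ENNReal.ofReal (1 - u (y + t)) * m y ≤ 1 * m y := mul_le_mul_left hb _
          _ = m y := one_mul _
      · exact hNpt
      · refine Eventually.of_forall fun y => ?_
        have h2 : Tendsto (fun t : ℝ => u (y + t)) atTop (𝓝 1) :=
          hu1.comp (tendsto_atTop_add_const_left atTop y tendsto_id)
        have h3 : Tendsto (fun t : ℝ => 1 - u (y + t)) atTop (𝓝 0) := by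
          have h4 := h2.const_sub 1
          simpa using h4
        have h5 : Tendsto (fun t : ℝ => ENNReal.ofReal (1 - u (y + t)) * m y) atTop (𝓝 0) := by
          have h6 : Tendsto (fun t : ℝ => ENNReal.ofReal (1 - u (y + t))) atTop (𝓝 0) := by
            have h7 := (ENNReal.continuous_ofReal.tendsto 0).comp h3
            simpa [Function.comp_def] using h7
          have h8 := ENNReal.Tendsto.mul_const h6 (Or.inr (ENNReal.coe_ne_top (r := ‖f₀ y‖₊)))
          simpa using h8
        have h9 := ((ENNReal.continuous_rpow_const (y := p)).tendsto 0).comp h5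
        simp only [Function.comp_def] at h9
        rwa [ENNReal.zero_rpow_of_pos hp0] at h9
    have hDten : Tendsto (fun t : ℝ =>
        Cq ^ (1/q) * (∫⁻ y, (ENNReal.ofReal (1 - u (y + t)) * m y) ^ p) ^ (1/p))
        atTop (𝓝 0) := by
      have h7 : Tendsto (fun t : ℝ =>
          (∫⁻ y, (ENNReal.ofReal (1 - u (y + t)) * m y) ^ p) ^ (1/p)) atTop (𝓝 0) := by
        have h8 := ((ENNReal.continuous_rpow_const (y := 1/p)).tendsto 0).comp hD
        simp only [Function.comp_def] at h8
        rwa [ENNReal.zero_rpow_of_pos (by positivity : (0:ℝ) < 1/p)] at h8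
      have h9 := ENNReal.Tendsto.const_mul (a := Cq ^ (1/q)) h7
        (Or.inr (ENNReal.rpow_ne_top_of_nonneg (by positivity : (0:ℝ) ≤ 1/q) hCqt))
      rwa [mul_zero] at h9
    have hev : ∀ᶠ t : ℝ in atTop,
        Cq ^ (1/q) * (∫⁻ y, (ENNReal.ofReal (1 - u (y + t)) * m y) ^ p) ^ (1/p) < (ε : ℝ≥0∞) :=
      hDten.eventually_lt_const (by exact_mod_cast hε)
    obtain ⟨t, ht⟩ := hev.exists
    -- integrability of the slice pieces
    have hut : Measurable fun z : ℝ => u (z + t) := hum.comp (measurable_id.add measurable_const)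
    have huabs' : ∀ z : ℝ, |u (z + t)| ≤ 1 := fun z => huabs (z + t)
    have hwabs' : ∀ z : ℝ, |1 - u (z + t)| ≤ 1 := fun z => by
      have h2 := hu01 (z + t)
      rw [abs_le]; constructor <;> [linarith [h2.2]; linarith [h2.1]]
    -- decomposition
    have hsplit : ∀ᵐ x ∂(volume : Measure ℝ),
        (∫ y, ((k (x - y) : ℝ) : ℂ) * f y) =
          (∫ z, ((k' (x - z) * u (z + t) : ℝ) : ℂ) * f₀ z) +
          (∫ z, ((k' (x - z) * (1 - u (z + t)) : ℝ) : ℂ) * f₀ z) := by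
      filter_upwards [hTfin] with x hx
      have hint1 := hIntSlice (fun z => u (z + t)) f₀ hut hf₀sm huabs' x hx
      have hint2 := hIntSlice (fun z => 1 - u (z + t)) f₀ (measurable_const.sub hut) hf₀sm
        hwabs' x hx
      have heq1 : (∫ y, ((k (x - y) : ℝ) : ℂ) * f y) =
          ∫ z, (((k' (x - z) * u (z + t) : ℝ) : ℂ) * f₀ z +
            ((k' (x - z) * (1 - u (z + t)) : ℝ) : ℂ) * f₀ z) := by
        apply integral_congr_ae
        filter_upwards [hksl x, hff₀] with y hky hfy
        rw [hky, hfy]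
        push_cast
        ring
      rw [heq1, integral_add hint1 hint2]
    have hsm1 : AEStronglyMeasurable
        (fun x => ∫ z, ((k' (x - z) * u (z + t) : ℝ) : ℂ) * f₀ z) volume := by
      apply AEStronglyMeasurable.integral_prod_right'
        (f := fun w : ℝ × ℝ => ((k' (w.1 - w.2) * u (w.2 + t) : ℝ) : ℂ) * f₀ w.2)
      apply Measurable.aestronglyMeasurable
      exact (Complex.measurable_ofReal.comp
        ((hk'm.comp (measurable_fst.sub measurable_snd)).mul
          (hum.comp (measurable_snd.add measurable_const)))).mul
        (hf₀sm.measurable.comp measurable_snd)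
    have hsm2 : AEStronglyMeasurable
        (fun x => ∫ z, ((k' (x - z) * (1 - u (z + t)) : ℝ) : ℂ) * f₀ z) volume := by
      apply AEStronglyMeasurable.integral_prod_right'
        (f := fun w : ℝ × ℝ => ((k' (w.1 - w.2) * (1 - u (w.2 + t)) : ℝ) : ℂ) * f₀ w.2)
      apply Measurable.aestronglyMeasurable
      exact (Complex.measurable_ofReal.comp
        ((hk'm.comp (measurable_fst.sub measurable_snd)).mul
          (measurable_const.sub (hum.comp (measurable_snd.add measurable_const))))).mul
        (hf₀sm.measurable.comp measurable_snd)
    have hBsplit : eLpNorm (fun x => ∫ y, ((k (x - y) : ℝ) : ℂ) * f y)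
        (ENNReal.ofReal r') volume ≤
        eLpNorm (fun x => ∫ z, ((k' (x - z) * u (z + t) : ℝ) : ℂ) * f₀ z)
          (ENNReal.ofReal r') volume +
        eLpNorm (fun x => ∫ z, ((k' (x - z) * (1 - u (z + t)) : ℝ) : ℂ) * f₀ z)
          (ENNReal.ofReal r') volume := by
      rw [eLpNorm_congr_ae hsplit]
      exact eLpNorm_add_le hsm1 hsm2 hR'1
    -- small piece
    have hsmall : eLpNorm (fun x => ∫ z, ((k' (x - z) * (1 - u (z + t)) : ℝ) : ℂ) * f₀ z)
        (ENNReal.ofReal r') volume ≤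
        Cq ^ (1/q) * (∫⁻ y, (ENNReal.ofReal (1 - u (y + t)) * m y) ^ p) ^ (1/p) := by
      refine le_trans (hElp_le _
        (fun x => ∫⁻ y, κ (x - y) * (ENNReal.ofReal (1 - u (y + t)) * m y)) ?_) ?_
      · refine Eventually.of_forall fun x => ?_
        refine le_trans (hEnorm (fun z => 1 - u (z + t)) f₀ x)
          (lintegral_mono fun y => le_of_eq ?_)
        rw [← Real.enorm_eq_ofReal (by linarith [(hu01 (y + t)).2]), enorm_eq_nnnorm]
      · exact hrpow_young _ (hwm t)
    -- translated competitor
    set ft : ℝ → ℂ := fun y => f₀ (y - t) with hftdef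
    have hft_elp : eLpNorm ft (ENNReal.ofReal p) volume =
        eLpNorm f₀ (ENNReal.ofReal p) volume :=
      eLpNorm_comp_measurePreserving hf₀p.1 (mp_trans t)
    have hftp : MemLp ft (ENNReal.ofReal p) volume := by
      refine ⟨(hf₀sm.comp_measurable (measurable_id.sub measurable_const)).aestronglyMeasurable,
        ?_⟩
      rw [hft_elp]
      exact hf₀p.2
    have hftnorm : eLpNorm ft (ENNReal.ofReal p) volume = 1 := by rw [hft_elp]; exact h1'
    have hAft : eLpNorm (fun x => ∫ y, ((k (x - y) * u y : ℝ) : ℂ) * ft y)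
        (ENNReal.ofReal r') volume =
        eLpNorm (fun x => ∫ z, ((k' (x - z) * u (z + t) : ℝ) : ℂ) * f₀ z)
          (ENNReal.ofReal r') volume := by
      have hptw : (fun x => ∫ y, ((k (x - y) * u y : ℝ) : ℂ) * ft y) =
          (fun w => ∫ z, ((k' (w - z) * u (z + t) : ℝ) : ℂ) * f₀ z) ∘ (fun x => x - t) := by
        funext x
        show (∫ y, ((k (x - y) * u y : ℝ) : ℂ) * ft y) =
          ∫ z, ((k' ((x - t) - z) * u (z + t) : ℝ) : ℂ) * f₀ z
        have e1 : (∫ y, ((k (x - y) * u y : ℝ) : ℂ) * ft y) =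
            ∫ y, ((k' (x - y) * u y : ℝ) : ℂ) * f₀ (y - t) := by
          apply integral_congr_ae
          filter_upwards [hksl x] with y hy
          rw [hy]
        rw [e1]
        have e2 := integral_add_right_eq_self (μ := (volume : Measure ℝ))
          (fun y => ((k' (x - y) * u y : ℝ) : ℂ) * f₀ (y - t)) t
        rw [← e2]
        congr 1
        funext z
        have e3 : x - (z + t) = x - t - z := by ring
        rw [e3, add_sub_cancel_right]
      rw [hptw]
      exact eLpNorm_comp_measurePreserving hsm1 (mp_trans t)
    have hAftSU : eLpNorm (fun x => ∫ y, ((k (x - y) * u y : ℝ) : ℂ) * ft y)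
        (ENNReal.ofReal r') volume ≤ SU := by
      rw [hSU]
      exact le_iSup₂_of_le ft ⟨hftp, hftnorm⟩ le_rfl
    calc eLpNorm (fun x => ∫ y, ((k (x - y) : ℝ) : ℂ) * f y) (ENNReal.ofReal r') volume
        ≤ eLpNorm (fun x => ∫ z, ((k' (x - z) * u (z + t) : ℝ) : ℂ) * f₀ z)
            (ENNReal.ofReal r') volume +
          eLpNorm (fun x => ∫ z, ((k' (x - z) * (1 - u (z + t)) : ℝ) : ℂ) * f₀ z)
            (ENNReal.ofReal r') volume := hBsplit
      _ ≤ SU + (ε : ℝ≥0∞) := by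
          gcongr
          · rw [← hAft]
            exact hAftSU
          · exact le_trans hsmall ht.le
  -- final assembly
  have hEq : SU = SK := by
    apply le_antisymm
    · rw [hSU, hSK]
      refine iSup₂_le fun f hf => ?_
      refine le_trans (hMAIN1 f hf.1 hf.2).le ?_
      exact le_iSup₂_of_le (fun y => ((‖f y‖ : ℝ) : ℂ))
        ⟨(hMAIN2 f hf.1 hf.2).1, (hMAIN2 f hf.1 hf.2).2⟩ le_rfl
    · rw [hSK]
      exact iSup₂_le fun f hf => hMAIN3 f hf.1 hf.2
  refine ⟨hEq, fun f hf h1 => ?_⟩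
  calc eLpNorm (fun x => ∫ y, ((k (x - y) * u y : ℝ) : ℂ) * f y) (ENNReal.ofReal r') volume
      < eLpNorm (fun x => ∫ y, ((k (x - y) : ℝ) : ℂ) * ((‖f y‖ : ℝ) : ℂ))
          (ENNReal.ofReal r') volume := hMAIN1 f hf h1
    _ ≤ SK := by
        rw [hSK]
        exact le_iSup₂_of_le (fun y => ((‖f y‖ : ℝ) : ℂ))
          ⟨(hMAIN2 f hf h1).1, (hMAIN2 f hf h1).2⟩ le_rfl
    _ = SU := hEq.symm
end

section
/- The operator norm N(p) of the Laplace transform L f(x) = ∫₀^∞ e^{−xt} f(t) dt from L^p(0,∞) to L^{p'}(0,∞), 1 ≤ p ≤ 2, equals the norm of the convolution operator F ↦ (h_p ∗ F̃) from L^p(ℝ) to L^{p'}(ℝ), where h_p(y) = exp(y/p' − e^y) and F̃(y) = F(−y); in particular N(p) ≤ ‖h_p‖_{p'/2} = (2π/p')^{1/p'} (Hardy's estimate). -/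
open MeasureTheory Set Real
open scoped ENNReal NNReal

-- change of variables x = exp y, lintegral version
lemma lint_cov (g : ℝ → ℝ≥0∞) :
    ∫⁻ x in Set.Ioi (0:ℝ), g x = ∫⁻ y : ℝ, ENNReal.ofReal (Real.exp y) * g (Real.exp y) := by
  have h1 : Set.Ioi (0:ℝ) = Real.exp '' Set.univ := by
    rw [Set.image_univ, Real.range_exp]
  rw [h1, lintegral_image_eq_lintegral_abs_det_fderiv_mul volume MeasurableSet.univ
    (fun x _ => ((Real.hasDerivAt_exp x).hasDerivWithinAt).hasFDerivWithinAt)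
    (Real.exp_injective.injOn) g]
  simp [ContinuousLinearMap.det_toSpanSingleton, abs_of_pos (Real.exp_pos _)]

-- change of variables x = exp y, Bochner version
lemma int_cov (g : ℝ → ℂ) :
    ∫ x in Set.Ioi (0:ℝ), g x = ∫ y : ℝ, Real.exp y • g (Real.exp y) := by
  have h1 : Set.Ioi (0:ℝ) = Real.exp '' Set.univ := by
    rw [Set.image_univ, Real.range_exp]
  rw [h1, integral_image_eq_integral_abs_deriv_smul MeasurableSet.univ
    (fun x _ => (Real.hasDerivAt_exp x).hasDerivWithinAt)
    (Real.exp_injective.injOn) g]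
  simp [abs_of_pos (Real.exp_pos _)]

-- norm transfer
lemma norm_cov {r : ℝ} (hr : 0 < r) (f : ℝ → ℂ) :
    eLpNorm f (ENNReal.ofReal r) (volume.restrict (Set.Ioi 0)) =
      eLpNorm (fun y => f (Real.exp y) * ((Real.exp (y/r) : ℝ) : ℂ)) (ENNReal.ofReal r) volume := by
  rw [eLpNorm_eq_lintegral_rpow_enorm_toReal (by simp [hr]) (by simp),
      eLpNorm_eq_lintegral_rpow_enorm_toReal (by simp [hr]) (by simp),
      ENNReal.toReal_ofReal hr.le]
  congr 1
  simp only [enorm_eq_nnnorm]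
  rw [lint_cov (fun x => (‖f x‖₊ : ℝ≥0∞) ^ r)]
  refine lintegral_congr fun y => ?_
  rw [nnnorm_mul, ENNReal.coe_mul, ENNReal.mul_rpow_of_nonneg _ _ hr.le]
  have h2 : ((‖((Real.exp (y/r) : ℝ) : ℂ)‖₊ : ℝ≥0∞)) ^ r = ENNReal.ofReal (Real.exp y) := by
    rw [Complex.nnnorm_real, ← enorm_eq_nnnorm (Real.exp _), Real.enorm_eq_ofReal (Real.exp_pos _).le,
      ENNReal.ofReal_rpow_of_pos (Real.exp_pos _), ← Real.exp_mul,
      div_mul_cancel₀ _ hr.ne']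
  rw [h2, mul_comm]

-- pointwise transfer of the Laplace operator
lemma op_cov {p p' : ℝ} (hp : p ≠ 0) (hp'0 : p' ≠ 0) (hpp' : 1/p + 1/p' = 1)
    (f : ℝ → ℂ) (s : ℝ) :
    (∫ t in Set.Ioi (0:ℝ), ((Real.exp (-(Real.exp s * t)) : ℝ) : ℂ) * f t)
        * ((Real.exp (s/p') : ℝ) : ℂ)
      = ∫ y : ℝ, ((Real.exp ((y+s)/p' - Real.exp (y+s)) : ℝ) : ℂ)
          * (f (Real.exp y) * ((Real.exp (y/p) : ℝ) : ℂ)) := by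
  rw [int_cov (fun t => ((Real.exp (-(Real.exp s * t)) : ℝ) : ℂ) * f t), ← integral_mul_const]
  refine integral_congr_ae (Filter.Eventually.of_forall fun y => ?_)
  have h1 : (y+s)/p' - Real.exp (y+s) = (y/p' + s/p' - Real.exp y * Real.exp s) := by
    rw [← Real.exp_add]; ring
  have h2 : y/p + y/p' = y := by
    calc y/p + y/p' = y * (1/p + 1/p') := by ring
    _ = y := by rw [hpp', mul_one]
  have key : Real.exp y * Real.exp (-(Real.exp s * Real.exp y)) * Real.exp (s/p')
      = Real.exp ((y+s)/p' - Real.exp (y+s)) * Real.exp (y/p) := by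
    rw [← Real.exp_add, ← Real.exp_add, ← Real.exp_add, ← Real.exp_add, Real.exp_eq_exp,
      add_comm s y]
    linear_combination (-y) * hpp'
  show Real.exp y • (((Real.exp (-(Real.exp s * Real.exp y)) : ℝ) : ℂ) * f (Real.exp y))
      * ((Real.exp (s/p') : ℝ) : ℂ) = _
  calc Real.exp y • (((Real.exp (-(Real.exp s * Real.exp y)) : ℝ) : ℂ) * f (Real.exp y))
      * ((Real.exp (s/p') : ℝ) : ℂ)
      = ((Real.exp y * Real.exp (-(Real.exp s * Real.exp y)) * Real.exp (s/p') : ℝ) : ℂ)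
          * f (Real.exp y) := by
        rw [Complex.real_smul]; push_cast; ring
    _ = _ := by rw [key]; push_cast; ring

section SupEq

variable {p p' : ℝ}

lemma laplace_congr (f g : ℝ → ℂ) (h : f =ᵐ[volume.restrict (Set.Ioi 0)] g) (x : ℝ) :
    ∫ t in Set.Ioi (0:ℝ), ((Real.exp (-(x*t)) : ℝ) : ℂ) * f t
      = ∫ t in Set.Ioi (0:ℝ), ((Real.exp (-(x*t)) : ℝ) : ℂ) * g t :=
  integral_congr_ae (h.mono fun t ht => by dsimp only; rw [ht])

lemma conv_congr (F G : ℝ → ℂ) (h : F =ᵐ[volume] G) (s : ℝ) :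
    ∫ y : ℝ, ((Real.exp ((y+s)/p' - Real.exp (y+s)) : ℝ) : ℂ) * F y
      = ∫ y : ℝ, ((Real.exp ((y+s)/p' - Real.exp (y+s)) : ℝ) : ℂ) * G y :=
  integral_congr_ae (h.mono fun t ht => by dsimp only; rw [ht])

set_option maxHeartbeats 1000000 in
lemma sup_eq (hp : 0 < p) (hp'0 : 0 < p') (hpp' : 1/p + 1/p' = 1) :
    (⨆ (f : ℝ → ℂ) (_ : MemLp f (ENNReal.ofReal p) (volume.restrict (Set.Ioi 0)) ∧
        eLpNorm f (ENNReal.ofReal p) (volume.restrict (Set.Ioi 0)) = 1),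
      eLpNorm (fun x => ∫ t in Set.Ioi (0:ℝ), ((Real.exp (-(x*t)) : ℝ) : ℂ) * f t)
        (ENNReal.ofReal p') (volume.restrict (Set.Ioi 0)))
    = (⨆ (F : ℝ → ℂ) (_ : MemLp F (ENNReal.ofReal p) volume ∧
        eLpNorm F (ENNReal.ofReal p) volume = 1),
      eLpNorm (fun s => ∫ y : ℝ, ((Real.exp ((y+s)/p' - Real.exp (y+s)) : ℝ) : ℂ) * F y)
        (ENNReal.ofReal p') volume) := by
  apply le_antisymm
  · refine iSup₂_le fun f hf => ?_
    obtain ⟨hmem, hnorm⟩ := hf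
    set f₀ : ℝ → ℂ := hmem.aestronglyMeasurable.mk f with hf₀
    have hf₀m : StronglyMeasurable f₀ := hmem.aestronglyMeasurable.stronglyMeasurable_mk
    have hfe : f =ᵐ[volume.restrict (Set.Ioi 0)] f₀ := hmem.aestronglyMeasurable.ae_eq_mk
    set F : ℝ → ℂ := fun y => f₀ (Real.exp y) * ((Real.exp (y/p) : ℝ) : ℂ) with hF
    have hFm : AEStronglyMeasurable F volume :=
      ((hf₀m.comp_measurable Real.measurable_exp).mul
        ((Complex.continuous_ofReal.comp (Real.continuous_exp.comp
          (continuous_id.div_const p))).stronglyMeasurable)).aestronglyMeasurable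
    have hFnorm : eLpNorm F (ENNReal.ofReal p) volume = 1 := by
      rw [← norm_cov hp f₀, eLpNorm_congr_ae hfe.symm, hnorm]
    have hFmem : MemLp F (ENNReal.ofReal p) volume :=
      ⟨hFm, by rw [hFnorm]; exact ENNReal.one_lt_top⟩
    have hval : eLpNorm (fun x => ∫ t in Set.Ioi (0:ℝ), ((Real.exp (-(x*t)) : ℝ) : ℂ) * f t)
        (ENNReal.ofReal p') (volume.restrict (Set.Ioi 0))
      = eLpNorm (fun s => ∫ y : ℝ, ((Real.exp ((y+s)/p' - Real.exp (y+s)) : ℝ) : ℂ) * F y)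
        (ENNReal.ofReal p') volume := by
      have e1 : (fun x => ∫ t in Set.Ioi (0:ℝ), ((Real.exp (-(x*t)) : ℝ) : ℂ) * f t)
          = fun x => ∫ t in Set.Ioi (0:ℝ), ((Real.exp (-(x*t)) : ℝ) : ℂ) * f₀ t :=
        funext fun x => laplace_congr f f₀ hfe x
      rw [e1, norm_cov hp'0]
      congr 1
      funext s
      exact op_cov hp.ne' hp'0.ne' hpp' f₀ s
    rw [hval]
    refine le_trans ?_ (le_iSup _ F)
    exact le_iSup_of_le ⟨hFmem, hFnorm⟩ le_rfl
  · refine iSup₂_le fun F hF => ?_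
    obtain ⟨hmem, hnorm⟩ := hF
    set F₀ : ℝ → ℂ := hmem.aestronglyMeasurable.mk F with hF₀
    have hF₀m : StronglyMeasurable F₀ := hmem.aestronglyMeasurable.stronglyMeasurable_mk
    have hFe : F =ᵐ[volume] F₀ := hmem.aestronglyMeasurable.ae_eq_mk
    set f : ℝ → ℂ := fun x => F₀ (Real.log x) * ((Real.exp (-(Real.log x / p)) : ℝ) : ℂ)
      with hfdef
    have hcomp : ∀ y : ℝ, f (Real.exp y) * ((Real.exp (y/p) : ℝ) : ℂ) = F₀ y := by
      intro y
      rw [hfdef]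
      simp only [Real.log_exp]
      rw [mul_assoc, ← Complex.ofReal_mul, ← Real.exp_add, neg_add_cancel, Real.exp_zero,
        Complex.ofReal_one, mul_one]
    have hfm : AEStronglyMeasurable f (volume.restrict (Set.Ioi 0)) :=
      ((hF₀m.comp_measurable Real.measurable_log).mul
        ((Complex.measurable_ofReal.comp (Real.measurable_exp.comp
          ((Real.measurable_log.div_const p).neg))).stronglyMeasurable)).aestronglyMeasurable.restrict
    have hfnorm : eLpNorm f (ENNReal.ofReal p) (volume.restrict (Set.Ioi 0)) = 1 := by
      rw [norm_cov hp f, funext hcomp, eLpNorm_congr_ae hFe.symm, hnorm]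
    have hfmem : MemLp f (ENNReal.ofReal p) (volume.restrict (Set.Ioi 0)) :=
      ⟨hfm, by rw [hfnorm]; exact ENNReal.one_lt_top⟩
    have hval : eLpNorm (fun s => ∫ y : ℝ, ((Real.exp ((y+s)/p' - Real.exp (y+s)) : ℝ) : ℂ) * F y)
          (ENNReal.ofReal p') volume
        = eLpNorm (fun x => ∫ t in Set.Ioi (0:ℝ), ((Real.exp (-(x*t)) : ℝ) : ℂ) * f t)
          (ENNReal.ofReal p') (volume.restrict (Set.Ioi 0)) := by
      rw [funext (conv_congr F F₀ hFe)]
      have e4 : (fun s => ∫ y : ℝ, ((Real.exp ((y+s)/p' - Real.exp (y+s)) : ℝ) : ℂ) * F₀ y)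
          = fun s => (fun x => ∫ t in Set.Ioi (0:ℝ), ((Real.exp (-(x*t)) : ℝ) : ℂ) * f t)
              (Real.exp s) * ((Real.exp (s/p') : ℝ) : ℂ) := by
        funext s
        dsimp only
        rw [op_cov hp.ne' hp'0.ne' hpp' f s]
        exact integral_congr_ae (Filter.Eventually.of_forall fun y => by
          dsimp only; rw [hcomp y])
      rw [e4]
      exact (norm_cov hp'0 (fun x => ∫ t in Set.Ioi (0:ℝ),
        ((Real.exp (-(x*t)) : ℝ) : ℂ) * f t)).symm
    rw [hval]
    refine le_trans ?_ (le_iSup _ f)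
    exact le_iSup_of_le ⟨hfmem, hfnorm⟩ le_rfl

end SupEq

section Bound

lemma holder3 {μ : Measure ℝ} {A B C : ℝ → ℝ≥0∞} (hA : AEMeasurable A μ)
    (hB : AEMeasurable B μ) (hC : AEMeasurable C μ)
    {e1 e2 e3 : ℝ} (h1 : 0 ≤ e1) (h2 : 0 ≤ e2) (h3 : 0 ≤ e3) (hsum : e1 + e2 + e3 = 1) :
    ∫⁻ x, A x ^ e1 * B x ^ e2 * C x ^ e3 ∂μ
      ≤ (∫⁻ x, A x ∂μ) ^ e1 * (∫⁻ x, B x ∂μ) ^ e2 * (∫⁻ x, C x ∂μ) ^ e3 := by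
  have := ENNReal.lintegral_prod_norm_pow_le (Finset.univ (α := Fin 3))
    (f := ![A, B, C]) (μ := μ) (fun i _ => by fin_cases i <;> simpa)
    (p := ![e1, e2, e3]) (by simp [Fin.sum_univ_three, hsum])
    (fun i _ => by fin_cases i <;> simpa)
  simpa [Fin.prod_univ_three] using this

lemma split_id {p p' q : ℝ} (hp0 : 0 < p) (hp'0 : 0 < p') (hq : q = p'/2)
    {a b : ℝ≥0∞} (ha0 : a ≠ 0) (hat : a ≠ ⊤) (hbt : b ≠ ⊤) :
    a * b = (a ^ q * b ^ p) ^ (1/p') * (a ^ q) ^ (1/p') * (b ^ p) ^ (1/p - 1/p') := by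
  by_cases hb : b = 0
  · simp [hb, ENNReal.zero_rpow_of_pos hp0, ENNReal.zero_rpow_of_pos (by positivity : (0:ℝ) < 1/p'), hp'0]
  · have eqa : q * (1/p') + q * (1/p') = 1 := by rw [hq]; field_simp; ring
    have eqb : p * (1/p') + p * (1/p - 1/p') = 1 := by field_simp; ring
    calc a * b = a ^ (q * (1/p') + q * (1/p')) * b ^ (p * (1/p') + p * (1/p - 1/p')) := by
          rw [eqa, eqb, ENNReal.rpow_one, ENNReal.rpow_one]
      _ = (a ^ (q * (1/p')) * a ^ (q * (1/p'))) * (b ^ (p * (1/p')) * b ^ (p * (1/p - 1/p'))) := by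
          rw [ENNReal.rpow_add _ _ ha0 hat, ENNReal.rpow_add _ _ hb hbt]
      _ = (a ^ q * b ^ p) ^ (1/p') * (a ^ q) ^ (1/p') * (b ^ p) ^ (1/p - 1/p') := by
          rw [ENNReal.mul_rpow_of_nonneg _ _ (by positivity : (0:ℝ) ≤ 1/p'),
            ← ENNReal.rpow_mul, ← ENNReal.rpow_mul, ← ENNReal.rpow_mul]
          ring

end Bound

lemma IH_val {p' : ℝ} (hp'0 : 0 < p') :
    ∫⁻ x : ℝ, ENNReal.ofReal (Real.exp (x/p' - Real.exp x)) ^ (p'/2)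
      = ENNReal.ofReal (Real.sqrt (2 * Real.pi / p')) := by
  have h1 : ∀ x : ℝ, ENNReal.ofReal (Real.exp (x/p' - Real.exp x)) ^ (p'/2)
      = ENNReal.ofReal (Real.exp x) * ENNReal.ofReal
          ((Real.exp x) ^ (-(1/2) : ℝ) * Real.exp (-(p'/2 * Real.exp x))) := by
    intro x
    rw [ENNReal.ofReal_rpow_of_pos (Real.exp_pos _), ← Real.exp_mul,
      ← ENNReal.ofReal_mul (Real.exp_pos x).le]
    congr 1
    rw [← Real.exp_mul, ← Real.exp_add, ← Real.exp_add, Real.exp_eq_exp]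
    field_simp
    ring
  simp_rw [h1]
  rw [← lint_cov (fun u => ENNReal.ofReal (u ^ (-(1/2) : ℝ) * Real.exp (-(p'/2 * u))))]
  have hint : IntegrableOn (fun u : ℝ => u ^ (-(1/2) : ℝ) * Real.exp (-(p'/2 * u)))
      (Set.Ioi 0) := by
    have := integrableOn_rpow_mul_exp_neg_mul_rpow (p := 1) (s := -(1/2)) (b := p'/2)
      (by norm_num) zero_lt_one (by positivity)
    refine this.congr_fun (fun x hx => ?_) measurableSet_Ioi
    dsimp only
    rw [Real.rpow_one, neg_mul]
  rw [← ofReal_integral_eq_lintegral_ofReal hint ?nn]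
  case nn =>
    filter_upwards [self_mem_ae_restrict measurableSet_Ioi] with x hx
    have : (0:ℝ) < x := hx
    positivity
  congr 1
  have h2 : ∀ x ∈ Set.Ioi (0:ℝ), x ^ (-(1/2) : ℝ) * Real.exp (-(p'/2 * x))
      = x ^ ((1/2 : ℝ) - 1) * Real.exp (-(p'/2 * x)) := by
    intro x hx; norm_num
  rw [setIntegral_congr_fun measurableSet_Ioi h2,
    Real.integral_rpow_mul_exp_neg_mul_Ioi (by norm_num) (by positivity),
    Real.Gamma_one_half_eq]
  rw [show ((1:ℝ)/(p'/2)) = 2/p' by ring,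
    show Real.sqrt Real.pi = Real.pi ^ ((1:ℝ)/2) from Real.sqrt_eq_rpow Real.pi,
    ← Real.mul_rpow (by positivity) Real.pi_pos.le, Real.sqrt_eq_rpow]
  congr 1
  ring


set_option maxHeartbeats 1000000 in
lemma conv_bound {p p' : ℝ} (hp0 : 0 < p) (hple : p ≤ p') (hp'0 : 0 < p')
    (hpp' : 1/p + 1/p' = 1) (F : ℝ → ℂ)
    (hmem : MemLp F (ENNReal.ofReal p) volume)
    (hnorm : eLpNorm F (ENNReal.ofReal p) volume = 1) :
    eLpNorm (fun s => ∫ y : ℝ, ((Real.exp ((y+s)/p' - Real.exp (y+s)) : ℝ) : ℂ) * F y)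
      (ENNReal.ofReal p') volume ≤ ENNReal.ofReal ((2 * Real.pi / p') ^ (1/p')) := by
  set F₀ : ℝ → ℂ := hmem.aestronglyMeasurable.mk F with hF₀def
  have hF₀m : StronglyMeasurable F₀ := hmem.aestronglyMeasurable.stronglyMeasurable_mk
  have hFe : F =ᵐ[volume] F₀ := hmem.aestronglyMeasurable.ae_eq_mk
  rw [funext (conv_congr F F₀ hFe)]
  set H : ℝ → ℝ≥0∞ := fun x => ENNReal.ofReal (Real.exp (x/p' - Real.exp x)) with hHdef
  set G : ℝ → ℝ≥0∞ := fun y => (‖F₀ y‖₊ : ℝ≥0∞) with hGdef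
  have hHm : Measurable H := ENNReal.measurable_ofReal.comp
    (Real.continuous_exp.comp ((continuous_id.div_const p').sub Real.continuous_exp)).measurable
  have hGm : Measurable G := hF₀m.measurable.enorm
  have hHne : ∀ x, H x ≠ 0 := fun x => by
    simp [hHdef, ENNReal.ofReal_eq_zero, not_le, Real.exp_pos]
  have hHnt : ∀ x, H x ≠ ⊤ := fun x => ENNReal.ofReal_ne_top
  have hGnt : ∀ y, G y ≠ ⊤ := fun y => ENNReal.coe_ne_top
  have hq0 : (0:ℝ) < p'/2 := by positivity
  have hIH : ∫⁻ x : ℝ, H x ^ (p'/2) = ENNReal.ofReal (Real.sqrt (2 * Real.pi / p')) :=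
    IH_val hp'0
  have hIHnt : ENNReal.ofReal (Real.sqrt (2 * Real.pi / p')) ≠ ⊤ := ENNReal.ofReal_ne_top
  have hIG : ∫⁻ y : ℝ, G y ^ p = 1 := by
    have h := hnorm
    rw [eLpNorm_congr_ae hFe, eLpNorm_eq_lintegral_rpow_enorm_toReal
      (by simp [hp0]) (by simp), ENNReal.toReal_ofReal hp0.le] at h
    simp only [enorm_eq_nnnorm] at h
    calc ∫⁻ y : ℝ, G y ^ p = ((∫⁻ y : ℝ, (‖F₀ y‖₊ : ℝ≥0∞) ^ p) ^ (1/p)) ^ p := by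
          rw [← ENNReal.rpow_mul, one_div_mul_cancel hp0.ne', ENNReal.rpow_one]
      _ = 1 := by rw [h, ENNReal.one_rpow]
  -- uncurried measurability
  have hunc : Measurable (Function.uncurry fun s y => H (y+s) ^ (p'/2) * G y ^ p) := by
    apply Measurable.mul
    · exact (hHm.comp ((measurable_snd.add measurable_fst))).pow_const _
    · exact (hGm.comp measurable_snd).pow_const _
  have htr : ∀ s : ℝ, ∫⁻ y : ℝ, H (y+s) ^ (p'/2) = ∫⁻ x : ℝ, H x ^ (p'/2) := fun s =>
    lintegral_add_right_eq_self (fun x => H x ^ (p'/2)) s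
  -- pointwise bound on the convolution
  have hpt : ∀ s : ℝ, (‖∫ y : ℝ, ((Real.exp ((y+s)/p' - Real.exp (y+s)) : ℝ) : ℂ) * F₀ y‖₊ : ℝ≥0∞)
      ≤ ∫⁻ y : ℝ, H (y+s) * G y := by
    intro s
    refine le_trans (enorm_integral_le_lintegral_enorm _) (le_of_eq (lintegral_congr fun y => ?_))
    rw [enorm_eq_nnnorm, nnnorm_mul, ENNReal.coe_mul, Complex.nnnorm_real,
      ← enorm_eq_nnnorm (Real.exp _), Real.enorm_eq_ofReal (Real.exp_pos _).le]
  -- Hölder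
  have hstep : ∀ s : ℝ, ∫⁻ y : ℝ, H (y+s) * G y
      ≤ (∫⁻ y : ℝ, H (y+s) ^ (p'/2) * G y ^ p) ^ (1/p')
        * ENNReal.ofReal (Real.sqrt (2 * Real.pi / p')) ^ (1/p') := by
    intro s
    have e3nn : (0:ℝ) ≤ 1/p - 1/p' := by
      rw [sub_nonneg]
      exact one_div_le_one_div_of_le hp0 hple
    have hsum : 1/p' + 1/p' + (1/p - 1/p') = 1 := by linarith
    calc ∫⁻ y : ℝ, H (y+s) * G y
        = ∫⁻ y : ℝ, (H (y+s) ^ (p'/2) * G y ^ p) ^ (1/p')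
            * (H (y+s) ^ (p'/2)) ^ (1/p') * (G y ^ p) ^ (1/p - 1/p') :=
          lintegral_congr fun y => split_id hp0 hp'0 rfl (hHne _) (hHnt _) (hGnt _)
      _ ≤ (∫⁻ y : ℝ, H (y+s) ^ (p'/2) * G y ^ p) ^ (1/p')
            * (∫⁻ y : ℝ, H (y+s) ^ (p'/2)) ^ (1/p') * (∫⁻ y : ℝ, G y ^ p) ^ (1/p - 1/p') :=
          holder3 (((hHm.comp (measurable_id.add_const s)).pow_const _).mul
              (hGm.pow_const _)).aemeasurable
            ((hHm.comp (measurable_id.add_const s)).pow_const _).aemeasurable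
            (hGm.pow_const _).aemeasurable
            (by positivity) (by positivity) e3nn hsum
      _ = (∫⁻ y : ℝ, H (y+s) ^ (p'/2) * G y ^ p) ^ (1/p')
            * ENNReal.ofReal (Real.sqrt (2 * Real.pi / p')) ^ (1/p') := by
          rw [htr s, hIH, hIG, ENNReal.one_rpow, mul_one]
  -- integral of K
  have hK : ∫⁻ s : ℝ, ∫⁻ y : ℝ, H (y+s) ^ (p'/2) * G y ^ p
      = ENNReal.ofReal (Real.sqrt (2 * Real.pi / p')) := by
    rw [lintegral_lintegral_swap hunc.aemeasurable]
    have : ∀ y : ℝ, ∫⁻ s : ℝ, H (y+s) ^ (p'/2) * G y ^ p = G y ^ p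
        * ENNReal.ofReal (Real.sqrt (2 * Real.pi / p')) := by
      intro y
      rw [lintegral_mul_const' _ _ (by
        exact ENNReal.rpow_ne_top_of_nonneg hp0.le (hGnt y)),
        lintegral_add_left_eq_self (fun x => H x ^ (p'/2)) y, hIH, mul_comm]
    simp_rw [this]
    rw [lintegral_mul_const' _ _ hIHnt, hIG, one_mul]
  -- final assembly
  rw [eLpNorm_eq_lintegral_rpow_enorm_toReal (by simp [hp'0]) (by simp),
    ENNReal.toReal_ofReal hp'0.le]
  have hmain : ∫⁻ s : ℝ,
        (‖∫ y : ℝ, ((Real.exp ((y+s)/p' - Real.exp (y+s)) : ℝ) : ℂ) * F₀ y‖₊ : ℝ≥0∞) ^ p'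
      ≤ ENNReal.ofReal (Real.sqrt (2 * Real.pi / p'))
        * ENNReal.ofReal (Real.sqrt (2 * Real.pi / p')) := by
    calc ∫⁻ s : ℝ,
          (‖∫ y : ℝ, ((Real.exp ((y+s)/p' - Real.exp (y+s)) : ℝ) : ℂ) * F₀ y‖₊ : ℝ≥0∞) ^ p'
        ≤ ∫⁻ s : ℝ, ((∫⁻ y : ℝ, H (y+s) ^ (p'/2) * G y ^ p) ^ (1/p')
            * ENNReal.ofReal (Real.sqrt (2 * Real.pi / p')) ^ (1/p')) ^ p' :=
          lintegral_mono fun s => ENNReal.rpow_le_rpow ((hpt s).trans (hstep s)) hp'0.le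
      _ = ∫⁻ s : ℝ, (∫⁻ y : ℝ, H (y+s) ^ (p'/2) * G y ^ p)
            * ENNReal.ofReal (Real.sqrt (2 * Real.pi / p')) := by
          refine lintegral_congr fun s => ?_
          rw [ENNReal.mul_rpow_of_nonneg _ _ hp'0.le, ← ENNReal.rpow_mul, ← ENNReal.rpow_mul,
            one_div_mul_cancel hp'0.ne', ENNReal.rpow_one, ENNReal.rpow_one]
      _ = (∫⁻ s : ℝ, ∫⁻ y : ℝ, H (y+s) ^ (p'/2) * G y ^ p)
            * ENNReal.ofReal (Real.sqrt (2 * Real.pi / p')) :=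
          lintegral_mul_const' _ _ hIHnt
      _ = ENNReal.ofReal (Real.sqrt (2 * Real.pi / p'))
            * ENNReal.ofReal (Real.sqrt (2 * Real.pi / p')) := by rw [hK]
  calc (∫⁻ s : ℝ,
        (‖∫ y : ℝ, ((Real.exp ((y+s)/p' - Real.exp (y+s)) : ℝ) : ℂ) * F₀ y‖₊ : ℝ≥0∞) ^ p')
          ^ (1/p')
      ≤ (ENNReal.ofReal (Real.sqrt (2 * Real.pi / p'))
          * ENNReal.ofReal (Real.sqrt (2 * Real.pi / p'))) ^ (1/p') :=
        ENNReal.rpow_le_rpow hmain (by positivity)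
    _ = ENNReal.ofReal ((2 * Real.pi / p') ^ (1/p')) := by
        rw [← ENNReal.ofReal_mul (Real.sqrt_nonneg _),
          Real.mul_self_sqrt (by positivity),
          ENNReal.ofReal_rpow_of_pos (by positivity)]



theorem stmt19 (p p' : ℝ) (hp1 : 1 ≤ p) (hp2 : p ≤ 2) (hp' : 1/p + 1/p' = 1) :
    (⨆ (f : ℝ → ℂ) (_ : MemLp f (ENNReal.ofReal p) (volume.restrict (Set.Ioi 0)) ∧
        eLpNorm f (ENNReal.ofReal p) (volume.restrict (Set.Ioi 0)) = 1),
      eLpNorm (fun x => ∫ t in Set.Ioi (0:ℝ), ((Real.exp (-(x*t)) : ℝ) : ℂ) * f t)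
        (ENNReal.ofReal p') (volume.restrict (Set.Ioi 0)))
    = (⨆ (F : ℝ → ℂ) (_ : MemLp F (ENNReal.ofReal p) volume ∧
        eLpNorm F (ENNReal.ofReal p) volume = 1),
      eLpNorm (fun s => ∫ y : ℝ, ((Real.exp ((y+s)/p' - Real.exp (y+s)) : ℝ) : ℂ) * F y)
        (ENNReal.ofReal p') volume) ∧
    (⨆ (f : ℝ → ℂ) (_ : MemLp f (ENNReal.ofReal p) (volume.restrict (Set.Ioi 0)) ∧
        eLpNorm f (ENNReal.ofReal p) (volume.restrict (Set.Ioi 0)) = 1),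
      eLpNorm (fun x => ∫ t in Set.Ioi (0:ℝ), ((Real.exp (-(x*t)) : ℝ) : ℂ) * f t)
        (ENNReal.ofReal p') (volume.restrict (Set.Ioi 0)))
      ≤ ENNReal.ofReal ((2 * Real.pi / p') ^ (1/p')) := by
  have hp0 : 0 < p := zero_lt_one.trans_le hp1
  rcases eq_or_lt_of_le hp1 with heq | hlt
  · -- degenerate case p = 1, p' = 0
    have hp'0 : p' = 0 := by
      rw [← heq] at hp'
      norm_num at hp'
      exact hp'
    have hz : ∀ {ι : Sort 1} (P : ι → Prop) (v : ι → ℝ≥0∞),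
        (∀ i, v i = 0) → (⨆ i, ⨆ (_ : P i), v i) = 0 := by
      intro ι P v hv
      simp [hv]
    rw [hp'0, ENNReal.ofReal_zero]
    rw [hz _ _ (fun f => eLpNorm_exponent_zero), hz _ _ (fun F => eLpNorm_exponent_zero)]
    simp
  · -- main case p > 1
    have hp'pos : 0 < p' := by
      have h1 : 0 < 1/p' := by
        have : 1/p < 1 := by
          rw [div_lt_one hp0]; exact hlt
        linarith
      exact one_div_pos.mp h1
    have hple : p ≤ p' := by
      rw [← one_div_le_one_div hp'pos hp0]
      have h2 : (1:ℝ)/2 ≤ 1/p := by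
        apply one_div_le_one_div_of_le hp0 hp2
      linarith
    refine ⟨sup_eq hp0 hp'pos hp', ?_⟩
    rw [sup_eq hp0 hp'pos hp']
    exact iSup₂_le fun F hF => conv_bound hp0 hple hp'pos hp' F hF.1 hF.2
end
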